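/- arXiv:1506.04686 — 7 statements merged into one kernel-verified Lean document; each statement's English description precedes it below -/
import Mathlib

section
/- For all integers d and r with d ≥ r ≥ 1, the minimum cardinality of a percolating set for the r-neighbour bootstrap process on the d-dimensional hypercube satisfies m(Q_d, r) ≥ 2^{r-1} + (1/r)·Σ_{j=1}^{r-1} C(d-j-1, r-j)·j·2^{j-1}, where C(a,b) = 0 when a < b. -/
open Finset

/-- One step of the `r`-neighbour bootstrap process on `G`: infected vertices stay infected,
and a vertex with at least `r` infected neighbours becomes infected. -/
def bootstrapStep {V : Type*} (G : SimpleGraph V) (r : ℕ) (A : Set V) : Set V :=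
  A ∪ {v | r ≤ (G.neighborSet v ∩ A).ncard}

/-- `A` percolates under the `r`-neighbour bootstrap process on `G`. -/
def Percolates {V : Type*} (G : SimpleGraph V) (r : ℕ) (A : Set V) : Prop :=
  ∃ n, (bootstrapStep G r)^[n] A = Set.univ

/-- `m(G,r)`: the minimum cardinality of a percolating set. -/
noncomputable def minPerc {V : Type*} (G : SimpleGraph V) (r : ℕ) : ℕ :=
  sInf {n | ∃ A : Set V, Percolates G r A ∧ A.ncard = n}

/-- The `d`-dimensional hypercube `Q_d`. -/
def cube (d : ℕ) : SimpleGraph (Fin d → Bool) where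
  Adj x y := ∃ i, x i ≠ y i ∧ ∀ j, j ≠ i → x j = y j
  symm := ⟨fun x y ⟨i, h1, h2⟩ => ⟨i, h1.symm, fun j hj => (h2 j hj).symm⟩⟩
  loopless := ⟨fun x ⟨i, h1, _⟩ => h1 rfl⟩

/-- The grid `∏ [a i]`. -/
def gridGraph {d : ℕ} (a : Fin d → ℕ) : SimpleGraph (∀ i, Fin (a i)) where
  Adj x y := ∃ i, (((x i : ℕ) + 1 = (y i : ℕ)) ∨ ((y i : ℕ) + 1 = (x i : ℕ))) ∧
    ∀ j, j ≠ i → x j = y j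
  symm := ⟨fun x y ⟨i, h1, h2⟩ => ⟨i, h1.symm, fun j hj => (h2 j hj).symm⟩⟩
  loopless := ⟨fun x ⟨i, h1, _⟩ => by rcases h1 with h | h <;> omega⟩

/-- The star with `n` leaves, `K_{1,n}`; vertex `0` is the centre. -/
def starGraph (n : ℕ) : SimpleGraph (Fin (n + 1)) where
  Adj x y := (x = 0 ∧ y ≠ 0) ∨ (y = 0 ∧ x ≠ 0)
  symm := ⟨fun x y h => h.symm⟩
  loopless := ⟨fun x h => by rcases h with ⟨h1, h2⟩ | ⟨h1, h2⟩ <;> exact h2 h1⟩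

/-- The edge `e` completes a copy of `H` in `G'`. -/
def CompletesCopy {V W : Type*} (H : SimpleGraph W) (G' : SimpleGraph V) (e : Sym2 V) : Prop :=
  ∃ φ : W → V, Function.Injective φ ∧ (∀ a b, H.Adj a b → G'.Adj (φ a) (φ b)) ∧
    ∃ a b, H.Adj a b ∧ e = s(φ a, φ b)

/-- `F` is weakly `(G,H)`-saturated. -/
def WeaklySaturated {V W : Type*} (G : SimpleGraph V) (H : SimpleGraph W)
    (F : SimpleGraph V) : Prop :=
  F ≤ G ∧ ∃ (n : ℕ) (e : Fin n → Sym2 V), Function.Injective e ∧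
    G.edgeSet \ F.edgeSet = Set.range e ∧
    ∀ i : Fin n, CompletesCopy H
      (SimpleGraph.fromEdgeSet (F.edgeSet ∪ e '' {j | j ≤ i})) (e i)

/-- `wsat(G,H)`: the minimum number of edges of a weakly `(G,H)`-saturated graph. -/
noncomputable def wsat {V W : Type*} (G : SimpleGraph V) (H : SimpleGraph W) : ℕ :=
  sInf {m | ∃ F : SimpleGraph V, WeaklySaturated G H F ∧ F.edgeSet.ncard = m}


section Stmt0Aux

open Submodule Module


def nval : ℕ → ℕ → ℕ
  | _, 0 => 0
  | 0, _ + 1 => 0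
  | (e+1), (r+1) => if e + 1 ≤ r + 1 then (r+1) * 2^r else nval e (r+1) + nval e r

lemma nval_closed : ∀ d r : ℕ, 1 ≤ r → r ≤ d →
    nval d r = r * 2^(r-1) +
      ∑ j ∈ Finset.Icc 1 (r-1), (d - j - 1).choose (r - j) * (j * 2^(j-1)) := by
  intro d
  induction d with
  | zero => intro r h1 h2; omega
  | succ e IH =>
    intro r h1 h2
    obtain ⟨r', rfl⟩ : ∃ r', r = r' + 1 := ⟨r - 1, by omega⟩
    by_cases hbase : e + 1 ≤ r' + 1
    · have hd : e = r' := by omega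
      subst hd
      have hz : ∀ j ∈ Finset.Icc 1 (e + 1 - 1), (e + 1 - j - 1).choose (e + 1 - j) * (j * 2^(j-1)) = 0 := by
        intro j hj
        simp only [Finset.mem_Icc] at hj
        have : (e + 1 - j - 1).choose (e + 1 - j) = 0 :=
          Nat.choose_eq_zero_of_lt (by omega)
        simp [this]
      rw [Finset.sum_congr rfl hz]
      simp [nval]
    · have hre : r' + 1 ≤ e := by omega
      have hrec : nval (e+1) (r'+1) = nval e (r'+1) + nval e r' := by
        simp [nval, hbase]
      rw [hrec, IH (r'+1) h1 hre]
      rcases Nat.eq_zero_or_pos r' with hr0 | hr0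
      · subst hr0; simp [nval]
      · rw [IH r' hr0 (by omega)]
        have pascal : ∀ j ∈ Finset.Icc 1 (r'+1-1),
            (e + 1 - j - 1).choose (r' + 1 - j) * (j * 2^(j-1))
            = (e - j - 1).choose (r' - j) * (j * 2^(j-1))
              + (e - j - 1).choose (r' + 1 - j) * (j * 2^(j-1)) := by
          intro j hj
          simp only [Finset.mem_Icc] at hj
          have h3 : e + 1 - j - 1 = (e - j - 1) + 1 := by omega
          have h4 : r' + 1 - j = (r' - j) + 1 := by omega
          rw [h3, h4, Nat.choose_succ_succ, add_mul, Nat.succ_eq_add_one, ← h4]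
        rw [Finset.sum_congr rfl pascal, Finset.sum_add_distrib]
        have hsplit : ∑ j ∈ Finset.Icc 1 (r'+1-1), (e - j - 1).choose (r' - j) * (j * 2^(j-1))
            = (∑ j ∈ Finset.Icc 1 (r'-1), (e - j - 1).choose (r' - j) * (j * 2^(j-1)))
              + (e - r' - 1).choose 0 * (r' * 2^(r'-1)) := by
          have h5 : r' + 1 - 1 = (r' - 1) + 1 := by omega
          rw [h5, Finset.sum_Icc_succ_top (by omega),
            show r' - 1 + 1 = r' from by omega]
          simp [Nat.sub_self]
        rw [hsplit]
        simp only [Nat.choose_zero_right, one_mul]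
        ring


/-- Append as a linear map. -/
noncomputable def appendL (n0 n1 : ℕ) :
    ((Fin n0 → ℝ) × (Fin n1 → ℝ)) →ₗ[ℝ] (Fin (n0 + n1) → ℝ) where
  toFun p := Fin.append p.1 p.2
  map_add' p q := by
    funext k
    refine Fin.addCases (motive := fun k =>
      Fin.append (p + q).1 (p + q).2 k = (Fin.append p.1 p.2 + Fin.append q.1 q.2) k)
      (fun i => ?_) (fun i => ?_) k <;>
      simp [Fin.append_left, Fin.append_right]
  map_smul' a p := by
    funext k
    refine Fin.addCases (motive := fun k =>
      Fin.append (a • p).1 (a • p).2 k = (a • Fin.append p.1 p.2) k)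
      (fun i => ?_) (fun i => ?_) k <;>
      simp [Fin.append_left, Fin.append_right]

lemma appendL_fst {n0 n1 : ℕ} (a : Fin n0 → ℝ) (b : Fin n1 → ℝ) :
    (LinearMap.funLeft ℝ ℝ (Fin.castAdd n1)) (Fin.append a b) = a := by
  funext k
  simp [LinearMap.funLeft_apply, Fin.append_left]

lemma appendL_snd {n0 n1 : ℕ} (a : Fin n0 → ℝ) (b : Fin n1 → ℝ) :
    (LinearMap.funLeft ℝ ℝ (Fin.natAdd n0)) (Fin.append a b) = b := by
  funext k
  simp [LinearMap.funLeft_apply, Fin.append_right]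

/-- The genericity hypothesis on direction vectors. -/
def Hyp (d r : ℕ) (c : Fin d → (Fin r → ℝ)) : Prop :=
  ∀ k, k ≤ r → ∀ t : Fin k → Fin d, Function.Injective t →
    LinearIndependent ℝ (fun j => c (t j))

theorem construction : ∀ (d r : ℕ), r ≤ d → ∀ c : Fin d → (Fin r → ℝ), Hyp d r c →
    ∃ (n : ℕ) (M : (Fin d → Bool) → ((Fin r → ℝ) →ₗ[ℝ] (Fin n → ℝ))),
      (∀ u i, M u (c i) = M (Function.update u i (!u i)) (c i)) ∧
      ∃ g : Fin (nval d r) → ((Fin d → Bool) × Fin d),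
        LinearIndependent ℝ (fun k => M (g k).1 (c (g k).2)) := by
  intro d
  induction d with
  | zero =>
    intro r hrd c _
    interval_cases r
    haveI : IsEmpty (Fin (nval 0 0)) := by
      rw [show nval 0 0 = 0 from by simp [nval]]; infer_instance
    exact ⟨0, fun _ => 0, fun _ _ => rfl, fun k => (IsEmpty.false k).elim,
      linearIndependent_empty_type⟩
  | succ e IH =>
    intro r hrd c H
    rcases r with _ | r'
    · haveI : IsEmpty (Fin (nval (e+1) 0)) := by
        rw [show nval (e+1) 0 = 0 from by simp [nval]]; infer_instance
      exact ⟨0, fun _ => 0, fun _ _ => rfl, fun k => (IsEmpty.false k).elim,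
        linearIndependent_empty_type⟩
    by_cases hbase : e + 1 ≤ r' + 1
    · -- base case d = r
      have hre : e = r' := by omega
      subst hre
      have hli : LinearIndependent ℝ c := by
        have h := H (e+1) le_rfl id Function.injective_id
        simpa using h
      have hcard : Fintype.card (Fin (e+1)) = finrank ℝ (Fin (e+1) → ℝ) := by
        simp
      let b := basisOfLinearIndependentOfCardEqFinrank hli hcard
      have hb : ⇑b = c := coe_basisOfLinearIndependentOfCardEqFinrank hli hcard
      have hcι : Fintype.card ((Fin (e+1)) × (Fin e → Bool)) = nval (e+1) (e+1) := by
        simp [nval, Fintype.card_fun]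
      let κ : ((Fin (e+1)) × (Fin e → Bool)) ≃ Fin (nval (e+1) (e+1)) :=
        Fintype.equivFinOfCardEq hcι
      let M : (Fin (e+1) → Bool) → ((Fin (e+1) → ℝ) →ₗ[ℝ] (Fin (nval (e+1) (e+1)) → ℝ)) :=
        fun u => b.constr ℝ (fun i => Pi.single (κ (i, Fin.removeNth i u)) 1)
      have hM : ∀ w i, M w (c i) = Pi.single (κ (i, Fin.removeNth i w)) 1 := by
        intro w i
        rw [← hb]
        exact b.constr_basis ℝ _ i
      refine ⟨_, M, ?_, ?_⟩
      · intro u i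
        rw [hM, hM]
        have hrem : Fin.removeNth i (Function.update u i (!u i)) = Fin.removeNth i u := by
          funext j
          exact Function.update_of_ne (Fin.succAbove_ne i j) _ u
        rw [hrem]
      · refine ⟨fun k => (Fin.insertNth (κ.symm k).1 false (κ.symm k).2, (κ.symm k).1), ?_⟩
        have hv : ∀ k, M (Fin.insertNth (κ.symm k).1 false (κ.symm k).2) (c (κ.symm k).1)
            = Pi.single k 1 := by
          intro k
          rw [hM, Fin.removeNth_insertNth, Prod.mk.eta, Equiv.apply_symm_apply]
        have hfam : (fun k => M (Fin.insertNth (κ.symm k).1 false (κ.symm k).2) (c (κ.symm k).1))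
            = ⇑(Pi.basisFun ℝ (Fin (nval (e+1) (e+1)))) := by
          funext k
          rw [hv k, Pi.basisFun_apply]
        exact hfam ▸ (Pi.basisFun ℝ _).linearIndependent
    · -- recursive case
      have hre : r' + 1 ≤ e := by omega
      -- half 0
      obtain ⟨n0, M0, cons0, g0, li0⟩ :=
        IH (r'+1) hre (fun i => c i.castSucc)
          (fun k hk t ht => H k hk (fun j => (t j).castSucc)
            (fun a b hab => ht (Fin.castSucc_injective e hab)))
      -- quotient map π
      have hclast : c (Fin.last e) ≠ 0 := by
        have h := H 1 (by omega) (fun _ => Fin.last e)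
          (fun a b _ => Subsingleton.elim a b)
        exact h.ne_zero 0
      have hfQ : finrank ℝ ((Fin (r'+1) → ℝ) ⧸ (ℝ ∙ (c (Fin.last e)))) = r' := by
        have h1 := Submodule.finrank_quotient_add_finrank (ℝ ∙ (c (Fin.last e)))
        rw [finrank_span_singleton hclast] at h1
        have h2 : finrank ℝ (Fin (r'+1) → ℝ) = r' + 1 := by simp
        omega
      let eQ : ((Fin (r'+1) → ℝ) ⧸ (ℝ ∙ (c (Fin.last e)))) ≃ₗ[ℝ] (Fin r' → ℝ) :=
        LinearEquiv.ofFinrankEq _ _ (by simp [hfQ])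
      let π : (Fin (r'+1) → ℝ) →ₗ[ℝ] (Fin r' → ℝ) :=
        eQ.toLinearMap ∘ₗ (ℝ ∙ (c (Fin.last e))).mkQ
      have hπlast : π (c (Fin.last e)) = 0 := by
        have h0 : (ℝ ∙ (c (Fin.last e))).mkQ (c (Fin.last e)) = 0 := by
          rw [Submodule.mkQ_apply, Submodule.Quotient.mk_eq_zero]
          exact Submodule.mem_span_singleton_self _
        simp [π, h0]
      have hπker : ∀ x, π x = 0 → x ∈ (ℝ ∙ (c (Fin.last e))) := by
        intro x hx
        have h0 : (ℝ ∙ (c (Fin.last e))).mkQ x = 0 := by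
          apply eQ.injective
          simpa [π] using hx
        rwa [Submodule.mkQ_apply, Submodule.Quotient.mk_eq_zero] at h0
      -- hypothesis for half 1
      have hyp1 : Hyp e r' (fun i => π (c i.castSucc)) := by
        intro k hk t ht
        rw [Fintype.linearIndependent_iff]
        intro f hf
        have hx : π (∑ j, f j • c (t j).castSucc) = 0 := by
          rw [map_sum]
          simpa [map_smul] using hf
        obtain ⟨μ, hμ⟩ := Submodule.mem_span_singleton.1 (hπker _ hx)
        have ht' : Function.Injective
            (Fin.snoc (fun j => (t j).castSucc) (Fin.last e) : Fin (k+1) → Fin (e+1)) := by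
          intro a b hab
          induction a using Fin.lastCases with
          | last =>
            induction b using Fin.lastCases with
            | last => rfl
            | cast b' =>
              rw [Fin.snoc_last, Fin.snoc_castSucc] at hab
              exact absurd hab.symm (Fin.castSucc_lt_last (t b')).ne
          | cast a' =>
            induction b using Fin.lastCases with
            | last =>
              rw [Fin.snoc_last, Fin.snoc_castSucc] at hab
              exact absurd hab (Fin.castSucc_lt_last (t a')).ne
            | cast b' =>
              rw [Fin.snoc_castSucc, Fin.snoc_castSucc] at hab
              exact congrArg Fin.castSucc (ht (Fin.castSucc_injective e hab))
        have hli := H (k+1) (by omega) _ ht'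
        rw [Fintype.linearIndependent_iff] at hli
        have hsum : ∑ j : Fin (k+1), (Fin.snoc f (-μ) : Fin (k+1) → ℝ) j •
            c ((Fin.snoc (fun j => (t j).castSucc) (Fin.last e) : Fin (k+1) → Fin (e+1)) j)
            = 0 := by
          rw [Fin.sum_univ_castSucc]
          simp only [Fin.snoc_castSucc, Fin.snoc_last]
          rw [neg_smul, hμ]
          simp
        have hz := hli (Fin.snoc f (-μ)) hsum
        intro i
        have h3 := hz i.castSucc
        simpa using h3
      obtain ⟨n1, M1, cons1, g1, li1⟩ :=
        IH r' (by omega) (fun i => π (c i.castSucc)) hyp1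
      -- assemble
      let P : (Fin (e+1) → Bool) → ((Fin (r'+1) → ℝ) →ₗ[ℝ]
          ((Fin n0 → ℝ) × (Fin n1 → ℝ))) :=
        fun u => (M0 (Fin.init u)).prod
          (if u (Fin.last e) = true then (M1 (Fin.init u)).comp π else 0)
      let M : (Fin (e+1) → Bool) → ((Fin (r'+1) → ℝ) →ₗ[ℝ] (Fin (n0+n1) → ℝ)) :=
        fun u => (appendL n0 n1).comp (P u)
      have hMapp : ∀ u x, M u x = appendL n0 n1 (P u x) := fun u x => rfl
      have hPfst : ∀ u x, (P u x).1 = M0 (Fin.init u) x := fun u x => rfl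
      have hPsnd : ∀ u x, (P u x).2
          = (if u (Fin.last e) = true then (M1 (Fin.init u)).comp π else 0) x :=
        fun u x => rfl
      have init_update_last : ∀ (u : Fin (e+1) → Bool) (x : Bool),
          Fin.init (Function.update u (Fin.last e) x) = Fin.init u := by
        intro u x
        funext j
        exact Function.update_of_ne (Fin.castSucc_lt_last j).ne _ u
      have init_update_cast : ∀ (u : Fin (e+1) → Bool) (i : Fin e) (x : Bool),
          Fin.init (Function.update u i.castSucc x) = Function.update (Fin.init u) i x := by
        intro u i x
        funext j
        by_cases hj : j = i
        · subst hj
          simp [Fin.init]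
        · have hj' : j.castSucc ≠ i.castSucc := fun h => hj (Fin.castSucc_injective e h)
          simp [Fin.init, Function.update_of_ne hj', Function.update_of_ne hj]
      refine ⟨n0 + n1, M, ?_, ?_⟩
      · -- consistency
        intro u i
        rw [hMapp, hMapp]
        congr 1
        refine Fin.lastCases ?_ ?_ i
        · -- i = last
          refine Prod.ext ?_ ?_
          · rw [hPfst, hPfst, init_update_last]
          · rw [hPsnd, hPsnd, init_update_last]
            cases hu : u (Fin.last e) <;>
              simp [Function.update_self, hu, hπlast]
        · -- i = castSucc
          intro i'
          have hlast : (Function.update u i'.castSucc (!u i'.castSucc)) (Fin.last e)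
              = u (Fin.last e) :=
            Function.update_of_ne (Fin.castSucc_lt_last i').ne' _ u
          refine Prod.ext ?_ ?_
          · rw [hPfst, hPfst, init_update_cast]
            exact cons0 (Fin.init u) i'
          · rw [hPsnd, hPsnd, init_update_cast, hlast]
            cases hu : u (Fin.last e)
            · simp
            · simp only [if_pos rfl, LinearMap.comp_apply]
              exact cons1 (Fin.init u) i'
      · -- linear independence
        have hsum : nval (e+1) (r'+1) = nval e (r'+1) + nval e r' := by
          simp [nval, hbase]
        let G : Fin (nval e (r'+1) + nval e r') → ((Fin (e+1) → Bool) × Fin (e+1)) :=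
          fun k => Fin.addCases (motive := fun _ => ((Fin (e+1) → Bool) × Fin (e+1)))
            (fun k0 => (Fin.snoc (g0 k0).1 false, (g0 k0).2.castSucc))
            (fun k1 => (Fin.snoc (g1 k1).1 true, (g1 k1).2.castSucc)) k
        have hmain : LinearIndependent ℝ (fun k => M (G k).1 (c (G k).2)) := by
          have hF0 : ∀ k0, M (Fin.snoc (g0 k0).1 false) (c ((g0 k0).2.castSucc))
              = Fin.append (M0 (g0 k0).1 (c ((g0 k0).2.castSucc))) 0 := by
            intro k0
            rw [hMapp]
            have h1 : P (Fin.snoc (g0 k0).1 false) (c ((g0 k0).2.castSucc))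
                = (M0 (g0 k0).1 (c ((g0 k0).2.castSucc)), 0) := by
              refine Prod.ext ?_ ?_
              · rw [hPfst, Fin.init_snoc]
              · rw [hPsnd]
                simp [Fin.snoc_last]
            rw [h1]
            rfl
          have hF1 : ∀ k1, M (Fin.snoc (g1 k1).1 true) (c ((g1 k1).2.castSucc))
              = Fin.append (M0 (g1 k1).1 (c ((g1 k1).2.castSucc)))
                  (M1 (g1 k1).1 (π (c ((g1 k1).2.castSucc)))) := by
            intro k1
            rw [hMapp]
            have h1 : P (Fin.snoc (g1 k1).1 true) (c ((g1 k1).2.castSucc))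
                = (M0 (g1 k1).1 (c ((g1 k1).2.castSucc)),
                   M1 (g1 k1).1 (π (c ((g1 k1).2.castSucc)))) := by
              refine Prod.ext ?_ ?_
              · rw [hPfst, Fin.init_snoc]
              · rw [hPsnd]
                simp [Fin.snoc_last, Fin.init_snoc]
            rw [h1]
            rfl
          rw [Fintype.linearIndependent_iff]
          intro f hf
          rw [Fin.sum_univ_add] at hf
          simp only [G, Fin.addCases_left, Fin.addCases_right] at hf
          -- second components
          have hsnd := congrArg (LinearMap.funLeft ℝ ℝ (Fin.natAdd n0)) hf
          rw [map_add, map_sum, map_sum, map_zero] at hsnd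
          simp only [map_smul, hF0, hF1] at hsnd
          have hsnd' : ∑ k1, f (Fin.natAdd _ k1) •
              M1 (g1 k1).1 (π (c ((g1 k1).2.castSucc))) = 0 := by
            have e0 : ∀ k0 : Fin (nval e (r'+1)),
                (LinearMap.funLeft ℝ ℝ (Fin.natAdd n0))
                  (Fin.append (M0 (g0 k0).1 (c ((g0 k0).2.castSucc))) (0 : Fin n1 → ℝ))
                = 0 := fun k0 => appendL_snd _ _
            have e1 : ∀ k1 : Fin (nval e r'),
                (LinearMap.funLeft ℝ ℝ (Fin.natAdd n0))
                  (Fin.append (M0 (g1 k1).1 (c ((g1 k1).2.castSucc)))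
                    (M1 (g1 k1).1 (π (c ((g1 k1).2.castSucc)))))
                = M1 (g1 k1).1 (π (c ((g1 k1).2.castSucc))) := fun k1 => appendL_snd _ _
            simp only [e0, e1, smul_zero, Finset.sum_const_zero, zero_add] at hsnd
            exact hsnd
          have hz1 : ∀ k1, f (Fin.natAdd _ k1) = 0 := by
            have := Fintype.linearIndependent_iff.1 li1 (fun k1 => f (Fin.natAdd _ k1)) hsnd'
            exact this
          -- first components
          have hfst := congrArg (LinearMap.funLeft ℝ ℝ (Fin.castAdd n1)) hf
          rw [map_add, map_sum, map_sum, map_zero] at hfst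
          simp only [map_smul, hF0, hF1] at hfst
          have hfst' : ∑ k0, f (Fin.castAdd _ k0) •
              M0 (g0 k0).1 (c ((g0 k0).2.castSucc)) = 0 := by
            have e0 : ∀ k0 : Fin (nval e (r'+1)),
                (LinearMap.funLeft ℝ ℝ (Fin.castAdd n1))
                  (Fin.append (M0 (g0 k0).1 (c ((g0 k0).2.castSucc))) (0 : Fin n1 → ℝ))
                = M0 (g0 k0).1 (c ((g0 k0).2.castSucc)) := fun k0 => appendL_fst _ _
            have e1 : ∀ k1 : Fin (nval e r'),
                (LinearMap.funLeft ℝ ℝ (Fin.castAdd n1))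
                  (Fin.append (M0 (g1 k1).1 (c ((g1 k1).2.castSucc)))
                    (M1 (g1 k1).1 (π (c ((g1 k1).2.castSucc)))))
                = M0 (g1 k1).1 (c ((g1 k1).2.castSucc)) := fun k1 => appendL_fst _ _
            simp only [e0, e1, hz1, zero_smul, Finset.sum_const_zero, add_zero] at hfst
            exact hfst
          have hz0 : ∀ k0, f (Fin.castAdd _ k0) = 0 :=
            Fintype.linearIndependent_iff.1 li0 (fun k0 => f (Fin.castAdd _ k0)) hfst'
          intro k
          refine Fin.addCases (motive := fun k => f k = 0) hz0 hz1 k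
        refine ⟨fun k => G (finCongr hsum k), ?_⟩
        exact hmain.comp (finCongr hsum) (Equiv.injective _)

/-- Vandermonde direction vectors. -/
noncomputable def cvan (d r : ℕ) : Fin d → (Fin r → ℝ) := fun i j => ((i : ℕ) : ℝ) ^ (j : ℕ)

lemma hyp_cvan (d r : ℕ) : Hyp d r (cvan d r) := by
  intro k hk t ht
  have hA : IsUnit (Matrix.vandermonde (fun j : Fin k => ((t j : ℕ) : ℝ))) := by
    rw [Matrix.isUnit_iff_isUnit_det, isUnit_iff_ne_zero, Matrix.det_vandermonde]
    refine Finset.prod_ne_zero_iff.2 (fun i _ => Finset.prod_ne_zero_iff.2 (fun j hj => ?_))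
    have hij : i ≠ j := (Finset.mem_Ioi.1 hj).ne
    have : t i ≠ t j := fun h => hij (ht h)
    have hne : ((t j : ℕ) : ℝ) ≠ ((t i : ℕ) : ℝ) := by
      exact_mod_cast fun h => this (Fin.val_injective h).symm
    exact sub_ne_zero.2 hne
  have hrows := (Matrix.linearIndependent_rows_iff_isUnit).2 hA
  apply LinearIndependent.of_comp (LinearMap.funLeft ℝ ℝ (Fin.castLE hk))
  exact hrows

lemma perc_bound (d r : ℕ) (hr : 1 ≤ r) (hrd : r ≤ d) (A : Set (Fin d → Bool))
    (hA : Percolates (cube d) r A) : nval d r ≤ r * A.ncard := by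
  classical
  obtain ⟨n, M, cons, g, li⟩ := construction d r hrd (cvan d r) (hyp_cvan d r)
  let T : Finset (Fin n → ℝ) :=
    Finset.image (fun p : ((Fin d → Bool) × Fin r) => M p.1 (cvan d r (Fin.castLE hrd p.2)))
      (A.toFinite.toFinset ×ˢ Finset.univ)
  have hTcard : T.card ≤ A.ncard * r := by
    refine le_trans Finset.card_image_le ?_
    rw [Finset.card_product, Finset.card_univ, Fintype.card_fin,
      Set.ncard_eq_toFinset_card A]
  set W := span ℝ ((T : Set (Fin n → ℝ))) with hW
  have key : ∀ (v : Fin d → Bool) (s : Finset (Fin d)), s.card = r →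
      (∀ j ∈ s, M v (cvan d r j) ∈ W) → ∀ i, M v (cvan d r i) ∈ W := by
    intro v s hs hmem i
    haveI : Nonempty (Fin r) := ⟨⟨0, hr⟩⟩
    have htop : span ℝ (cvan d r '' ↑s) = ⊤ := by
      let te : Fin r ≃ {x // x ∈ s} :=
        (Fintype.equivFinOfCardEq (by rw [Fintype.card_coe, hs])).symm
      have hinj : Function.Injective (fun k : Fin r => ((te k : Fin d))) := by
        intro a b hab
        exact te.injective (Subtype.ext hab)
      have hli2 := hyp_cvan d r r le_rfl _ hinj
      have hcfr : Fintype.card (Fin r) = finrank ℝ (Fin r → ℝ) := by simp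
      have h2 := hli2.span_eq_top_of_card_eq_finrank hcfr
      rw [← h2]
      congr 1
      ext x
      simp only [Set.mem_range, Set.mem_image, Finset.mem_coe]
      constructor
      · rintro ⟨j, hj, rfl⟩
        refine ⟨te.symm ⟨j, hj⟩, ?_⟩
        rw [Equiv.apply_symm_apply]
      · rintro ⟨kk, rfl⟩
        exact ⟨(te kk : Fin d), (te kk).2, rfl⟩
    have hmem2 : M v (cvan d r i) ∈ span ℝ ((M v) '' (cvan d r '' ↑s)) := by
      rw [← Submodule.map_span]
      exact ⟨cvan d r i, by rw [htop]; trivial, rfl⟩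
    refine (span_le.2 ?_) hmem2
    rintro y ⟨x', ⟨j, hj, rfl⟩, rfl⟩
    exact hmem j hj
  have main : ∀ (m : ℕ) (v : Fin d → Bool), v ∈ (bootstrapStep (cube d) r)^[m] A →
      ∀ i, M v (cvan d r i) ∈ W := by
    intro m
    induction m with
    | zero =>
      intro v hv i
      rw [Function.iterate_zero_apply] at hv
      refine key v (Finset.image (Fin.castLE hrd) Finset.univ) ?_ ?_ i
      · rw [Finset.card_image_of_injective _ (Fin.castLE_injective hrd)]
        simp
      · intro j hj
        rw [Finset.mem_image] at hj
        obtain ⟨k, -, rfl⟩ := hj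
        apply subset_span
        refine Finset.mem_coe.2 (Finset.mem_image.2 ⟨(v, k), ?_, rfl⟩)
        rw [Finset.mem_product]
        exact ⟨(Set.Finite.mem_toFinset _).2 hv, Finset.mem_univ _⟩
    | succ m IHm =>
      intro v hv i
      rw [Function.iterate_succ_apply'] at hv
      rcases hv with hv | hv
      · exact IHm v hv i
      · simp only [Set.mem_setOf_eq] at hv
        set S := (bootstrapStep (cube d) r)^[m] A with hS
        set nb : Fin d → (Fin d → Bool) := fun j => Function.update v j (!v j) with hnb
        have hsub : (cube d).neighborSet v ∩ S ⊆ nb '' {j | nb j ∈ S} := by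
          rintro w ⟨hw1, hw2⟩
          obtain ⟨j, hne, hagree⟩ : ∃ i, v i ≠ w i ∧ ∀ j, j ≠ i → v j = w j := hw1
          have hwj : w = nb j := by
            funext l
            by_cases hl : l = j
            · subst hl
              simp only [nb, Function.update_self]
              revert hne
              cases v l <;> cases w l <;> simp
            · simp only [nb, Function.update_of_ne hl]
              exact (hagree l hl).symm
          exact ⟨j, Set.mem_setOf.2 (hwj ▸ hw2), hwj.symm⟩
        have hD : r ≤ ({j | nb j ∈ S}).ncard := by
          have h1 : ((cube d).neighborSet v ∩ S).ncard ≤ (nb '' {j | nb j ∈ S}).ncard :=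
            Set.ncard_le_ncard hsub (Set.toFinite _)
          have h2 := Set.ncard_image_le (f := nb) (s := {j | nb j ∈ S}) (Set.toFinite _)
          omega
        obtain ⟨s, hs_sub, hs_card⟩ := Finset.exists_subset_card_eq
          (show r ≤ (Set.toFinite {j | nb j ∈ S}).toFinset.card by
            rwa [← Set.ncard_eq_toFinset_card])
        refine key v s hs_card ?_ i
        intro j hj
        have hjS : nb j ∈ S := by
          have h3 := hs_sub hj
          rwa [Set.Finite.mem_toFinset] at h3
        rw [cons v j]
        exact IHm (nb j) hjS j
  obtain ⟨m, hm⟩ := hA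
  have hall : ∀ p : ((Fin d → Bool) × Fin d), M p.1 (cvan d r p.2) ∈ W := fun p =>
    main m p.1 (by rw [hm]; trivial) p.2
  let g' : Fin (nval d r) → W := fun k => ⟨M (g k).1 (cvan d r (g k).2), hall (g k)⟩
  have li' : LinearIndependent ℝ g' := by
    apply LinearIndependent.of_comp (W.subtype)
    exact li
  have h1 : nval d r ≤ finrank ℝ W := by
    simpa using li'.fintype_card_le_finrank
  have h2 : finrank ℝ W ≤ T.card := finrank_span_finset_le_card T
  have := le_trans h1 (le_trans h2 hTcard)
  rwa [Nat.mul_comm] at this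


end Stmt0Aux

/-- For `d ≥ r ≥ 1`,
`m(Q_d, r) ≥ 2^(r-1) + (1/r)·∑_{j=1}^{r-1} C(d-j-1, r-j)·j·2^(j-1)`. -/
theorem stmt0 (d r : ℕ) (hr : 1 ≤ r) (hrd : r ≤ d) :
    (2 : ℝ) ^ (r - 1) +
      (∑ j ∈ Finset.Icc 1 (r - 1),
        (Nat.choose (d - j - 1) (r - j) : ℝ) * j * 2 ^ (j - 1)) / r
      ≤ (minPerc (cube d) r : ℝ) := by
  have hne : {n | ∃ A : Set (Fin d → Bool), Percolates (cube d) r A ∧ A.ncard = n}.Nonempty :=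
    ⟨(Set.univ : Set (Fin d → Bool)).ncard, ⟨Set.univ, ⟨0, rfl⟩, rfl⟩⟩
  obtain ⟨A, hA, hcard⟩ := Nat.sInf_mem hne
  have hb := perc_bound d r hr hrd A hA
  rw [hcard] at hb
  have hb2 : nval d r ≤ r * minPerc (cube d) r := hb
  have hreal : ((nval d r : ℝ)) ≤ (r : ℝ) * (minPerc (cube d) r : ℝ) := by
    exact_mod_cast hb2
  have hrpos : (0:ℝ) < r := by exact_mod_cast hr
  have hcast : ((nval d r : ℝ)) = r * 2^(r-1) +
      ∑ j ∈ Finset.Icc 1 (r - 1),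
        (Nat.choose (d - j - 1) (r - j) : ℝ) * j * 2 ^ (j - 1) := by
    rw [nval_closed d r hr hrd]
    push_cast
    rw [add_right_inj]
    refine Finset.sum_congr rfl (fun j _ => by push_cast; ring)
  have h3 : (2:ℝ) ^ (r - 1) +
      (∑ j ∈ Finset.Icc 1 (r - 1),
        (Nat.choose (d - j - 1) (r - j) : ℝ) * j * 2 ^ (j - 1)) / r
      = ((nval d r : ℝ)) / r := by
    rw [hcast]
    field_simp
  rw [h3, div_le_iff₀ hrpos]
  linarith
end

section
/- For every finite graph G and every positive integer r, m(G, r) ≥ wsat(G, S_{r+1})/r; that is, r times the minimum cardinality of a percolating set for the r-neighbour bootstrap process on G is at least the weak saturation number of the star S_{r+1} in G. -/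
open Finset

private lemma completesCopy_mono' {V W : Type*} {H : SimpleGraph W} {G1 G2 : SimpleGraph V}
    (h : G1 ≤ G2) {e : Sym2 V} (hc : CompletesCopy H G1 e) : CompletesCopy H G2 e := by
  obtain ⟨φ, hinj, hadj, a, b, hab, he⟩ := hc
  exact ⟨φ, hinj, fun a b hab => h (hadj a b hab), a, b, hab, he⟩

private lemma completes_star {V : Type*} {K : SimpleGraph V} {r : ℕ} {u v : V}
    (huv : K.Adj u v) (S : Finset V) (hcard : S.card = r)
    (hS : ∀ w ∈ S, K.Adj u w ∧ w ≠ v) :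
    CompletesCopy (starGraph (r + 1)) K s(u, v) := by
  classical
  set S' : Finset V := insert v S with hS'def
  have hvS : v ∉ S := fun h => (hS v h).2 rfl
  have hcard' : S'.card = r + 1 := by
    rw [hS'def, Finset.card_insert_of_notMem hvS, hcard]
  have hmem : ∀ w ∈ S', K.Adj u w := by
    intro w hw
    rcases Finset.mem_insert.mp hw with h | h
    · exact h ▸ huv
    · exact (hS w h).1
  have huS' : u ∉ S' := by
    intro hu
    exact (K.loopless.irrefl u) (hmem u hu)
  let ψ : Fin (r + 1) → V := fun j => (S'.equivFin.symm (Fin.cast hcard'.symm j) : V)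
  have hψinj : Function.Injective ψ := by
    intro a b h
    have h2 := S'.equivFin.symm.injective (Subtype.ext h)
    have h3 := congrArg Fin.val h2
    exact Fin.ext (by simpa using h3)
  have hψmem : ∀ j, ψ j ∈ S' := fun j => (S'.equivFin.symm _).2
  let φ : Fin (r + 2) → V := fun a => if h : a = 0 then u else ψ (a.pred h)
  have hφ0 : φ 0 = u := by simp [φ]
  have hφsucc : ∀ j : Fin (r + 1), φ j.succ = ψ j := by
    intro j
    simp [φ, Fin.succ_ne_zero]
  have hφinj : Function.Injective φ := by
    intro a b h
    by_cases ha : a = 0 <;> by_cases hb : b = 0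
    · rw [ha, hb]
    · exfalso; rw [ha] at h; simp only [φ, dif_pos rfl, dif_neg hb] at h
      exact huS' (h ▸ hψmem (b.pred hb))
    · exfalso; rw [hb] at h; simp only [φ, dif_pos rfl, dif_neg ha] at h
      exact huS' (h.symm ▸ hψmem (a.pred ha))
    · simp only [φ, dif_neg ha, dif_neg hb] at h
      have h4 : a.pred ha = b.pred hb := hψinj h
      have := congrArg Fin.succ h4
      rwa [Fin.succ_pred, Fin.succ_pred] at this
  refine ⟨φ, hφinj, ?_, ?_⟩
  · intro a b hab
    have key : ∀ c : Fin (r + 2), c ≠ 0 → K.Adj u (φ c) := by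
      intro c hc
      simp only [φ, dif_neg hc]
      exact hmem _ (hψmem _)
    rcases hab with ⟨h1, h2⟩ | ⟨h1, h2⟩
    · rw [h1, hφ0]; exact key b h2
    · rw [h1, hφ0]; exact (key a h2).symm
  · -- find index of v
    obtain ⟨j0, hj0⟩ : ∃ j0 : Fin (r + 1), ψ j0 = v := by
      refine ⟨Fin.cast hcard' (S'.equivFin ⟨v, Finset.mem_insert_self v S⟩), ?_⟩
      simp [ψ]
    refine ⟨0, j0.succ, Or.inl ⟨rfl, Fin.succ_ne_zero j0⟩, ?_⟩
    rw [hφ0, hφsucc, hj0]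

private lemma weaklySaturated_of_list {V W : Type*} {G : SimpleGraph V} {H : SimpleGraph W}
    {F : SimpleGraph V} (hFG : F ≤ G) (L : List (Sym2 V)) (hnd : L.Nodup)
    (hset : {x | x ∈ L} = G.edgeSet \ F.edgeSet)
    (hcomp : ∀ i : Fin L.length, CompletesCopy H
      (SimpleGraph.fromEdgeSet (F.edgeSet ∪ {x | x ∈ L.take (↑i + 1)})) (L.get i)) :
    WeaklySaturated G H F := by
  refine ⟨hFG, L.length, L.get, List.nodup_iff_injective_get.mp hnd, ?_, ?_⟩
  · rw [← hset]
    ext x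
    simp only [Set.mem_setOf_eq, Set.mem_range, List.mem_iff_get]
  · intro i
    have hkey : L.get '' {j | j ≤ i} = {x | x ∈ L.take (↑i + 1)} := by
      ext x
      simp only [Set.mem_image, Set.mem_setOf_eq, List.mem_iff_getElem]
      constructor
      · rintro ⟨j, hj, rfl⟩
        have hji : (j : ℕ) ≤ (i : ℕ) := hj
        refine ⟨j, ?_, ?_⟩
        · simp only [List.length_take]
          omega
        · rw [List.getElem_take]
          rfl
      · rintro ⟨k, hk, rfl⟩
        simp only [List.length_take] at hk
        refine ⟨⟨k, by omega⟩, by simpa [Fin.le_def] using (by omega : k ≤ (i : ℕ)), ?_⟩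
        rw [List.getElem_take]
        rfl
    rw [hkey]
    exact hcomp i

private lemma prefix_append_batch {V W : Type*} {H : SimpleGraph W} {B : Set (Sym2 V)}
    {L : List (Sym2 V)} (hnd : L.Nodup)
    (hcomp : ∀ i : Fin L.length, CompletesCopy H
      (SimpleGraph.fromEdgeSet (B ∪ {x | x ∈ L.take (↑i + 1)})) (L.get i))
    {D : Set (Sym2 V)} (hDfin : D.Finite) (hdisj : ∀ x ∈ L, x ∉ D)
    (hD : ∀ m ∈ D, CompletesCopy H
      (SimpleGraph.fromEdgeSet (B ∪ {x | x ∈ L} ∪ {m})) m) :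
    ∃ L' : List (Sym2 V), L'.Nodup ∧ {x | x ∈ L'} = {x | x ∈ L} ∪ D ∧
      ∀ i : Fin L'.length, CompletesCopy H
        (SimpleGraph.fromEdgeSet (B ∪ {x | x ∈ L'.take (↑i + 1)})) (L'.get i) := by
  classical
  set M : List (Sym2 V) := hDfin.toFinset.toList with hMdef
  have hMset : ∀ x, x ∈ M ↔ x ∈ D := by
    intro x
    rw [hMdef, Finset.mem_toList, Set.Finite.mem_toFinset]
  refine ⟨L ++ M, ?_, ?_, ?_⟩
  · refine hnd.append (Finset.nodup_toList _) ?_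
    intro x hxL hxM
    exact hdisj x hxL ((hMset x).mp hxM)
  · ext x
    simp only [Set.mem_setOf_eq, List.mem_append, Set.mem_union, hMset]
  · intro i
    have hi : (i : ℕ) < L.length + M.length := by
      have := i.2
      simpa [List.length_append] using this
    by_cases hiL : (i : ℕ) < L.length
    · have htake : (L ++ M).take (↑i + 1) = L.take (↑i + 1) :=
        List.take_append_of_le_length (by omega)
      have hget : (L ++ M).get i = L.get ⟨i, hiL⟩ := by
        simp [List.getElem_append_left hiL]
      rw [htake, hget]
      exact hcomp ⟨i, hiL⟩
    · push_neg at hiL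
      set m := (L ++ M).get i with hm
      have hmM : m ∈ M := by
        rw [hm]
        simp only [List.get_eq_getElem]
        rw [List.getElem_append_right hiL]
        exact List.getElem_mem _
      have hmD : m ∈ D := (hMset m).mp hmM
      have hsub : B ∪ {x | x ∈ L} ∪ {m} ⊆ B ∪ {x | x ∈ (L ++ M).take (↑i + 1)} := by
        intro x hx
        rcases hx with (hx | hx) | hx
        · exact Or.inl hx
        · refine Or.inr ?_
          have : x ∈ L.take (↑i + 1) := by
            rw [List.take_of_length_le (by omega)]
            exact hx
          simp only [Set.mem_setOf_eq]
          rw [List.take_append]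
          exact List.mem_append_left _ (by rwa [List.take_of_length_le (by omega)])
        · rcases hx with rfl
          refine Or.inr ?_
          show m ∈ (L ++ M).take (↑i + 1)
          have hmem : m ∈ (L ++ M).take (↑i + 1) := by
            rw [List.mem_iff_getElem]
            refine ⟨i, ?_, ?_⟩
            · simp only [List.length_take, List.length_append]
              omega
            · rw [List.getElem_take]
              rfl
          exact hmem
      exact completesCopy_mono' (SimpleGraph.fromEdgeSet_mono hsub) (hD m hmD)

private lemma exists_wsat_graph {V : Type*} [Fintype V] (G : SimpleGraph V) (r : ℕ)
    (A : Set V) (hA : Percolates G r A) :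
    ∃ F : SimpleGraph V, WeaklySaturated G (starGraph (r + 1)) F ∧
      F.edgeSet.ncard ≤ r * A.ncard := by
  classical
  have hex : ∀ v : V, ∃ t ⊆ G.neighborFinset v, t.card = min r (G.neighborFinset v).card :=
    fun v => Finset.exists_subset_card_eq (min_le_right _ _)
  choose T hTsub hTcard using hex
  set Agen : Finset (Sym2 V) := A.toFinset.biUnion (fun v => (T v).image (fun w => s(v, w)))
    with hAgenDef
  set F : SimpleGraph V := SimpleGraph.fromEdgeSet ↑Agen with hFdef
  have hTadj : ∀ v w, w ∈ T v → G.Adj v w := by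
    intro v w hw
    exact (SimpleGraph.mem_neighborFinset G v w).mp (hTsub v hw)
  have hFadj : ∀ v ∈ A, ∀ w ∈ T v, F.Adj v w := by
    intro v hv w hw
    rw [hFdef, SimpleGraph.fromEdgeSet_adj]
    refine ⟨?_, (hTadj v w hw).ne⟩
    rw [Finset.mem_coe, hAgenDef, Finset.mem_biUnion]
    exact ⟨v, Set.mem_toFinset.mpr hv, Finset.mem_image_of_mem _ hw⟩
  have hFedge : ∀ v ∈ A, ∀ w ∈ T v, s(v, w) ∈ F.edgeSet := fun v hv w hw =>
    (SimpleGraph.mem_edgeSet F).mpr (hFadj v hv w hw)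
  have hFG : F ≤ G := by
    intro a b hab
    rw [hFdef, SimpleGraph.fromEdgeSet_adj] at hab
    obtain ⟨hmem, hne⟩ := hab
    rw [Finset.mem_coe, hAgenDef, Finset.mem_biUnion] at hmem
    obtain ⟨v, hv, hmem⟩ := hmem
    rw [Finset.mem_image] at hmem
    obtain ⟨w, hw, heq⟩ := hmem
    have hadj := hTadj v w hw
    rcases Sym2.eq_iff.mp heq with ⟨rfl, rfl⟩ | ⟨rfl, rfl⟩
    · exact hadj
    · exact hadj.symm
  have hcount : F.edgeSet.ncard ≤ r * A.ncard := by
    have h1 : F.edgeSet ⊆ ↑Agen := by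
      rw [hFdef, SimpleGraph.edgeSet_fromEdgeSet]
      exact Set.diff_subset
    have h2 : F.edgeSet.ncard ≤ (↑Agen : Set (Sym2 V)).ncard :=
      Set.ncard_le_ncard h1 (Agen.finite_toSet)
    rw [Set.ncard_coe_finset] at h2
    have h3 : Agen.card ≤ ∑ v ∈ A.toFinset, (T v).card :=
      le_trans (Finset.card_biUnion_le) (Finset.sum_le_sum fun v _ => Finset.card_image_le)
    have h4 : ∑ v ∈ A.toFinset, (T v).card ≤ ∑ _v ∈ A.toFinset, r :=
      Finset.sum_le_sum fun v _ => by rw [hTcard]; exact min_le_left _ _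
    rw [Finset.sum_const, smul_eq_mul] at h4
    have h5 : A.toFinset.card = A.ncard := (Set.ncard_eq_toFinset_card' A).symm
    calc F.edgeSet.ncard ≤ Agen.card := h2
      _ ≤ ∑ v ∈ A.toFinset, (T v).card := h3
      _ ≤ A.toFinset.card * r := h4
      _ = r * A.ncard := by rw [h5, mul_comm]
  -- base addability
  have base_add : ∀ (u w : V), u ∈ A → G.Adj u w → s(u, w) ∉ F.edgeSet →
      ∀ P : Set (Sym2 V), CompletesCopy (starGraph (r + 1))
        (SimpleGraph.fromEdgeSet (F.edgeSet ∪ P ∪ {s(u, w)})) s(u, w) := by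
    intro u w hu hadj hnotF P
    have hwT : w ∉ T u := fun hw => hnotF (hFedge u hu w hw)
    have hTcard' : (T u).card = r := by
      rcases le_or_gt r (G.neighborFinset u).card with h | h
      · rw [hTcard]; exact min_eq_left h
      · exfalso
        have heq : T u = G.neighborFinset u :=
          Finset.eq_of_subset_of_card_le (hTsub u)
            (by rw [hTcard]; exact le_of_eq (min_eq_right (le_of_lt h)).symm)
        exact hwT (heq ▸ (SimpleGraph.mem_neighborFinset G u w).mpr hadj)
    have hKuw : (SimpleGraph.fromEdgeSet (F.edgeSet ∪ P ∪ {s(u, w)})).Adj u w := by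
      rw [SimpleGraph.fromEdgeSet_adj]
      exact ⟨Or.inr rfl, hadj.ne⟩
    refine completes_star hKuw (T u) hTcard' ?_
    intro x hx
    refine ⟨?_, fun hxw => hwT (hxw ▸ hx)⟩
    rw [SimpleGraph.fromEdgeSet_adj]
    exact ⟨Or.inl (Or.inl (hFedge u hu x hx)), (hTadj u x hx).ne⟩
  set Ek : ℕ → Set (Sym2 V) :=
    fun k => {e | e ∈ G.edgeSet ∧ ∃ v ∈ (bootstrapStep G r)^[k] A, v ∈ e} with hEkdef
  have hAmono : ∀ k, (bootstrapStep G r)^[k] A ⊆ (bootstrapStep G r)^[k + 1] A := by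
    intro k
    rw [Function.iterate_succ_apply']
    exact Set.subset_union_left
  have hEmono : ∀ k, Ek k ⊆ Ek (k + 1) := by
    intro k e he
    exact ⟨he.1, by obtain ⟨v, hv, hve⟩ := he.2; exact ⟨v, hAmono k hv, hve⟩⟩
  have main : ∀ k, ∃ L : List (Sym2 V), L.Nodup ∧
      {x | x ∈ L} = Ek k \ F.edgeSet ∧
      ∀ i : Fin L.length, CompletesCopy (starGraph (r + 1))
        (SimpleGraph.fromEdgeSet (F.edgeSet ∪ {x | x ∈ L.take (↑i + 1)})) (L.get i) := by
    intro k
    induction k with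
    | zero =>
      have hD : ∀ m ∈ Ek 0 \ F.edgeSet, CompletesCopy (starGraph (r + 1))
          (SimpleGraph.fromEdgeSet
            (F.edgeSet ∪ {x | x ∈ ([] : List (Sym2 V))} ∪ {m})) m := by
        intro m
        induction m using Sym2.ind with
        | _ u w =>
          intro hm
          obtain ⟨⟨hmG, v, hv, hvm⟩, hmF⟩ := hm
          rw [Function.iterate_zero_apply] at hv
          have hadj : G.Adj u w := (SimpleGraph.mem_edgeSet G).mp hmG
          rcases Sym2.mem_iff.mp hvm with rfl | rfl
          · exact base_add v w hv hadj hmF _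
          · rw [Sym2.eq_swap] at hmF ⊢
            exact base_add v u hv hadj.symm hmF _
      obtain ⟨L', h1, h2, h3⟩ := prefix_append_batch (B := F.edgeSet)
        (L := ([] : List (Sym2 V))) List.nodup_nil (fun i => i.elim0)
        (D := Ek 0 \ F.edgeSet) (Set.toFinite _) (by simp) hD
      refine ⟨L', h1, ?_, h3⟩
      rw [h2]
      simp
    | succ k ih =>
      obtain ⟨L, hnd, hset, hcomp⟩ := ih
      have hdisj : ∀ x ∈ L, x ∉ (Ek (k + 1) \ Ek k) \ F.edgeSet := by
        intro x hx
        have hx' : x ∈ Ek k \ F.edgeSet := by rw [← hset]; exact hx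
        rintro ⟨⟨_, hk⟩, _⟩
        exact hk hx'.1
      have hkey : ∀ (u w : V), G.Adj u w →
          u ∈ (bootstrapStep G r)^[k + 1] A → u ∉ (bootstrapStep G r)^[k] A →
          w ∉ (bootstrapStep G r)^[k] A →
          CompletesCopy (starGraph (r + 1))
            (SimpleGraph.fromEdgeSet (F.edgeSet ∪ {x | x ∈ L} ∪ {s(u, w)})) s(u, w) := by
        intro u w hadj hu1 hu0 hw0
        rw [Function.iterate_succ_apply'] at hu1
        rcases hu1 with hu1 | hu1
        · exact absurd hu1 hu0
        · have hcard : r ≤ (G.neighborSet u ∩ (bootstrapStep G r)^[k] A).ncard := hu1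
          set X : Set V := G.neighborSet u ∩ (bootstrapStep G r)^[k] A with hXdef
          rw [Set.ncard_eq_toFinset_card' X] at hcard
          obtain ⟨S, hSsub, hScard⟩ := Finset.exists_subset_card_eq hcard
          have hKuw : (SimpleGraph.fromEdgeSet
              (F.edgeSet ∪ {x | x ∈ L} ∪ {s(u, w)})).Adj u w := by
            rw [SimpleGraph.fromEdgeSet_adj]
            exact ⟨Or.inr rfl, hadj.ne⟩
          refine completes_star hKuw S hScard ?_
          intro x hxS
          have hxX : x ∈ X := Set.mem_toFinset.mp (hSsub hxS)
          obtain ⟨hxN, hxA⟩ := hxX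
          have hxadj : G.Adj u x := hxN
          have hxw : x ≠ w := fun h => hw0 (h ▸ hxA)
          refine ⟨?_, hxw⟩
          rw [SimpleGraph.fromEdgeSet_adj]
          refine ⟨?_, hxadj.ne⟩
          by_cases hF : s(u, x) ∈ F.edgeSet
          · exact Or.inl (Or.inl hF)
          · refine Or.inl (Or.inr ?_)
            rw [hset]
            exact ⟨⟨(SimpleGraph.mem_edgeSet G).mpr hxadj, x, hxA, Sym2.mem_mk_right u x⟩, hF⟩
      have hD : ∀ m ∈ (Ek (k + 1) \ Ek k) \ F.edgeSet, CompletesCopy (starGraph (r + 1))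
          (SimpleGraph.fromEdgeSet (F.edgeSet ∪ {x | x ∈ L} ∪ {m})) m := by
        intro m
        induction m using Sym2.ind with
        | _ u w =>
          intro hm
          obtain ⟨⟨⟨hmG, v, hv, hvm⟩, hmEk⟩, hmF⟩ := hm
          have hnotAk : ∀ x, x ∈ s(u, w) → x ∉ (bootstrapStep G r)^[k] A := by
            intro x hx hxA
            exact hmEk ⟨hmG, x, hxA, hx⟩
          have hadj : G.Adj u w := (SimpleGraph.mem_edgeSet G).mp hmG
          rcases Sym2.mem_iff.mp hvm with rfl | rfl
          · exact hkey v w hadj hv (hnotAk v (Sym2.mem_mk_left v w))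
              (hnotAk w (Sym2.mem_mk_right v w))
          · rw [Sym2.eq_swap]
            exact hkey v u hadj.symm hv (hnotAk v (Sym2.mem_mk_right u v))
              (hnotAk u (Sym2.mem_mk_left u v))
      obtain ⟨L', h1, h2, h3⟩ := prefix_append_batch (B := F.edgeSet) hnd hcomp
        (D := (Ek (k + 1) \ Ek k) \ F.edgeSet) (Set.toFinite _) hdisj hD
      refine ⟨L', h1, ?_, h3⟩
      rw [h2, hset]
      have hmono := hEmono k
      ext x
      simp only [Set.mem_union, Set.mem_diff]
      constructor
      · rintro (⟨h, hF⟩ | ⟨⟨h, _⟩, hF⟩)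
        · exact ⟨hmono h, hF⟩
        · exact ⟨h, hF⟩
      · rintro ⟨h, hF⟩
        by_cases hk : x ∈ Ek k
        · exact Or.inl ⟨hk, hF⟩
        · exact Or.inr ⟨⟨h, hk⟩, hF⟩
  obtain ⟨n, hn⟩ := hA
  obtain ⟨L, hnd, hset, hcomp⟩ := main n
  have hEn : Ek n = G.edgeSet := by
    ext e
    constructor
    · exact fun he => he.1
    · intro he
      refine ⟨he, e.out.1, ?_, Sym2.out_fst_mem e⟩
      rw [hn]
      trivial
  exact ⟨F, weaklySaturated_of_list hFG L hnd (by rw [hset, hEn]) hcomp, hcount⟩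

/-- For every finite graph `G` and positive integer `r`,
`m(G, r) ≥ wsat(G, S_{r+1}) / r`. -/
theorem stmt5 {V : Type*} [Fintype V] (G : SimpleGraph V) (r : ℕ) (hr : 1 ≤ r) :
    (wsat G (starGraph (r + 1)) : ℝ) / r ≤ (minPerc G r : ℝ) := by
  classical
  have hmem : minPerc G r ∈ {n | ∃ A : Set V, Percolates G r A ∧ A.ncard = n} :=
    Nat.sInf_mem ⟨(Set.univ : Set V).ncard, Set.univ, ⟨0, rfl⟩, rfl⟩
  obtain ⟨A, hA, hAcard⟩ := hmem
  obtain ⟨F, hWS, hle⟩ := exists_wsat_graph G r A hA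
  have hwsat : wsat G (starGraph (r + 1)) ≤ F.edgeSet.ncard :=
    Nat.sInf_le ⟨F, hWS, rfl⟩
  have hfinal : wsat G (starGraph (r + 1)) ≤ r * minPerc G r := by
    rw [← hAcard]
    omega
  have hrpos : (0 : ℝ) < (r : ℝ) := by exact_mod_cast hr
  rw [div_le_iff₀ hrpos]
  calc (wsat G (starGraph (r + 1)) : ℝ) ≤ ((r * minPerc G r : ℕ) : ℝ) := by
        exact_mod_cast hfinal
    _ = (minPerc G r : ℝ) * r := by push_cast; ring
end

section
/- Let G be a finite graph, r a positive integer, and F a spanning subgraph of G. If the set A₀ := {v ∈ V(G) : deg_F(v) ≥ min{r, deg_G(v)}} percolates with respect to the r-neighbour bootstrap process on G, then F is weakly (G, S_{r+1})-saturated. -/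
open Finset

lemma star_completes {V : Type*} [Fintype V] (r : ℕ) (G' : SimpleGraph V) (v u : V)
    (hadj : G'.Adj v u) (hdeg : r ≤ (G'.neighborSet v \ {u}).ncard) :
    CompletesCopy (starGraph (r + 1)) G' s(v, u) := by
  classical
  obtain ⟨T, hTsub, hTcard⟩ := Set.exists_subset_card_eq hdeg
  have hTfin : T.Finite := Set.toFinite T
  have hc : hTfin.toFinset.card = r := by
    exact (Set.ncard_eq_toFinset_card T hTfin).symm.trans hTcard
  set g : Fin r → V := fun i => (hTfin.toFinset.equivFin.symm (Fin.cast hc.symm i) : V) with hg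
  have hgmem : ∀ i, g i ∈ T := fun i => by
    have := (hTfin.toFinset.equivFin.symm (Fin.cast hc.symm i)).2
    simpa [hTfin.mem_toFinset] using this
  have hginj : Function.Injective g := by
    intro a b hab
    have := Subtype.ext (p := fun x => x ∈ hTfin.toFinset) hab
    have := hTfin.toFinset.equivFin.symm.injective this
    exact Fin.cast_injective _ this
  have hTnbr : ∀ i, G'.Adj v (g i) := fun i => (hTsub (hgmem i)).1
  have hTne : ∀ i, g i ≠ u := fun i => (hTsub (hgmem i)).2
  set φ : Fin (r + 1 + 1) → V := Fin.cons v (Fin.cons u g) with hφ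
  have hadjφ : ∀ b : Fin (r + 1), G'.Adj v ((Fin.cons u g : Fin (r+1) → V) b) := by
    intro b
    refine Fin.cases ?_ ?_ b
    · simpa using hadj
    · intro i; simpa using hTnbr i
  refine ⟨φ, ?_, ?_, 0, 1, Or.inl ⟨rfl, by simp⟩, by simp [hφ, Fin.cons_zero]⟩
  · rw [hφ, Fin.cons_injective_iff]
    constructor
    · rintro ⟨b, hb⟩
      exact (hadjφ b).ne' hb
    · rw [Fin.cons_injective_iff]
      refine ⟨?_, hginj⟩
      rintro ⟨i, hi⟩
      exact (hTne i) hi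
  · intro a b hab
    rcases hab with ⟨ha, hb⟩ | ⟨hb, ha⟩
    · subst ha
      obtain ⟨b', rfl⟩ := Fin.exists_succ_eq.2 hb
      simpa [hφ] using hadjφ b'
    · subst hb
      obtain ⟨a', rfl⟩ := Fin.exists_succ_eq.2 ha
      simpa [hφ] using (hadjφ a').symm

open SimpleGraph in
lemma star_completes_edge {V : Type*} [Fintype V] (r : ℕ) (S E : Set (Sym2 V)) (hES : E ⊆ S)
    (v u : V) (hvu : v ≠ u) (hmem : s(v,u) ∈ S) (hnd : ∀ w, s(v,w) ∈ E → v ≠ w)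
    (hu : s(v,u) ∉ E) (hdeg : r ≤ {w | s(v,w) ∈ E}.ncard) :
    CompletesCopy (_root_.starGraph (r+1)) (SimpleGraph.fromEdgeSet S) s(v,u) := by
  apply star_completes
  · exact (SimpleGraph.fromEdgeSet_adj _).2 ⟨hmem, hvu⟩
  · refine le_trans hdeg (Set.ncard_le_ncard ?_ (Set.toFinite _))
    intro w hw
    refine ⟨(SimpleGraph.fromEdgeSet_adj _).2 ⟨hES hw, hnd w hw⟩, ?_⟩
    intro hwu
    rw [Set.mem_singleton_iff] at hwu
    exact hu (hwu ▸ hw)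

open SimpleGraph in
lemma stage {V : Type*} [Fintype V] (G : SimpleGraph V) (r : ℕ)
    (E : Set (Sym2 V)) (hEG : E ⊆ G.edgeSet) (B : Set V)
    (hB : ∀ v ∈ B, (∀ u, G.Adj v u → s(v,u) ∈ E) ∨ r ≤ {u | s(v,u) ∈ E}.ncard) :
    ∃ L : List (Sym2 V), L.Nodup ∧ (∀ x ∈ L, x ∈ G.edgeSet ∧ x ∉ E) ∧
      (∀ i (h : i < L.length), CompletesCopy (_root_.starGraph (r+1))
        (SimpleGraph.fromEdgeSet (E ∪ {x | x ∈ L.take (i+1)})) L[i]) ∧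
      (∀ u v, G.Adj u v → u ∈ B → s(u,v) ∈ E ∪ {x | x ∈ L}) := by
  classical
  set D : Set (Sym2 V) := {e | e ∈ G.edgeSet ∧ e ∉ E ∧ ∃ w ∈ B, w ∈ e} with hD
  have hDfin : D.Finite := Set.toFinite D
  refine ⟨hDfin.toFinset.toList, Finset.nodup_toList _, ?_, ?_, ?_⟩
  · intro x hx
    rw [Finset.mem_toList, Set.Finite.mem_toFinset] at hx
    exact ⟨hx.1, hx.2.1⟩
  · intro i h
    set L := hDfin.toFinset.toList with hL
    have hxD : L[i] ∈ D := by
      rw [← Set.Finite.mem_toFinset hDfin, ← Finset.mem_toList]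
      exact List.getElem_mem h
    have hxtake : L[i] ∈ {x | x ∈ L.take (i+1)} := by
      simp only [Set.mem_setOf_eq]
      exact List.mem_take_iff_getElem.2 ⟨i, by omega, rfl⟩
    have hES : E ⊆ E ∪ {x | x ∈ L.take (i+1)} := Set.subset_union_left
    have hnd : ∀ a b : V, s(a,b) ∈ E → a ≠ b := by
      intro a b hab hne
      exact (G.not_isDiag_of_mem_edgeSet (hEG hab)) (hne ▸ Sym2.mk_isDiag_iff.2 rfl)
    obtain ⟨a, b, hab⟩ : ∃ a b, L[i] = s(a, b) := by
      obtain ⟨⟨a, b⟩, h⟩ := Quot.exists_rep L[i]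
      exact ⟨a, b, h.symm⟩
    obtain ⟨hGe, hnE, w, hwB, hw⟩ := hxD
    rw [hab] at hGe hnE hw hxtake ⊢
    have hGadj : G.Adj a b := hGe
    rcases Sym2.mem_iff.1 hw with rfl | rfl
    · rcases hB w hwB with hall | hdeg
      · exact absurd (hall b hGadj) hnE
      · exact star_completes_edge r _ E hES w b hGadj.ne (Or.inr hxtake)
          (fun x hx => hnd w x hx) hnE hdeg
    · rcases hB w hwB with hall | hdeg
      · exact absurd (hall a hGadj.symm) (Sym2.eq_swap ▸ hnE)
      · rw [Sym2.eq_swap]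
        exact star_completes_edge r _ E hES w a hGadj.ne'
          (Or.inr (Sym2.eq_swap ▸ hxtake)) (fun x hx => hnd w x hx)
          (Sym2.eq_swap ▸ hnE) hdeg
  · intro u v huv huB
    by_cases hE : s(u,v) ∈ E
    · exact Or.inl hE
    · refine Or.inr ?_
      simp only [Set.mem_setOf_eq, Finset.mem_toList, Set.Finite.mem_toFinset]
      exact ⟨huv, hE, u, huB, Sym2.mem_mk_left u v⟩

open SimpleGraph in
lemma global {V : Type*} [Fintype V] (G F : SimpleGraph V) (r : ℕ) (hFG : F ≤ G) (n : ℕ) :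
    ∃ L : List (Sym2 V), L.Nodup ∧ (∀ x ∈ L, x ∈ G.edgeSet ∧ x ∉ F.edgeSet) ∧
      (∀ i (h : i < L.length), CompletesCopy (_root_.starGraph (r+1))
        (SimpleGraph.fromEdgeSet (F.edgeSet ∪ {x | x ∈ L.take (i+1)})) L[i]) ∧
      (∀ u v, G.Adj u v →
        u ∈ (bootstrapStep G r)^[n]
          {v | min r (G.neighborSet v).ncard ≤ (F.neighborSet v).ncard} →
        s(u,v) ∈ F.edgeSet ∪ {x | x ∈ L}) := by
  induction n with
  | zero =>
    have hB : ∀ v ∈ {v | min r (G.neighborSet v).ncard ≤ (F.neighborSet v).ncard},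
        (∀ u, G.Adj v u → s(v,u) ∈ F.edgeSet) ∨ r ≤ {u | s(v,u) ∈ F.edgeSet}.ncard := by
      intro v hv
      simp only [Set.mem_setOf_eq] at hv
      rcases le_or_gt r (G.neighborSet v).ncard with hge | hlt
      · right
        have : {u | s(v,u) ∈ F.edgeSet} = F.neighborSet v := by
          ext u; simp [SimpleGraph.mem_edgeSet, SimpleGraph.mem_neighborSet]
        rw [this]
        exact (min_eq_left hge) ▸ hv
      · left
        rw [min_eq_right hlt.le] at hv
        have heq : F.neighborSet v = G.neighborSet v :=
          Set.eq_of_subset_of_ncard_le (fun u hu => hFG hu) hv (Set.toFinite _)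
        intro u hu
        have : u ∈ F.neighborSet v := heq ▸ hu
        exact F.mem_edgeSet.2 this
    obtain ⟨L, h1, h2, h3, h4⟩ := stage G r F.edgeSet (edgeSet_mono hFG)
      {v | min r (G.neighborSet v).ncard ≤ (F.neighborSet v).ncard} hB
    exact ⟨L, h1, h2, h3, fun u v huv hu => h4 u v huv hu⟩
  | succ n ih =>
    obtain ⟨L, hnd, hsub, hcomp, hcov⟩ := ih
    set A := (bootstrapStep G r)^[n]
      {v | min r (G.neighborSet v).ncard ≤ (F.neighborSet v).ncard} with hA
    set E : Set (Sym2 V) := F.edgeSet ∪ {x | x ∈ L} with hE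
    have hEG : E ⊆ G.edgeSet := by
      rintro x (hx | hx)
      · exact edgeSet_mono hFG hx
      · exact (hsub x hx).1
    have hB : ∀ v ∈ bootstrapStep G r A,
        (∀ u, G.Adj v u → s(v,u) ∈ E) ∨ r ≤ {u | s(v,u) ∈ E}.ncard := by
      intro v hv
      rcases hv with hv | hv
      · left
        intro u hu
        exact hcov v u hu hv
      · right
        simp only [Set.mem_setOf_eq] at hv
        refine le_trans hv (Set.ncard_le_ncard ?_ (Set.toFinite _))
        rintro u ⟨hu1, hu2⟩
        have := hcov u v (G.adj_symm hu1) hu2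
        rwa [Sym2.eq_swap] at this
    obtain ⟨L', hnd', hsub', hcomp', hcov'⟩ := stage G r E hEG (bootstrapStep G r A) hB
    refine ⟨L ++ L', ?_, ?_, ?_, ?_⟩
    · refine hnd.append hnd' ?_
      intro x hxL hxL'
      exact (hsub' x hxL').2 (Or.inr hxL)
    · intro x hx
      rcases List.mem_append.1 hx with hx | hx
      · exact hsub x hx
      · exact ⟨(hsub' x hx).1, fun hf => (hsub' x hx).2 (Or.inl hf)⟩
    · intro i h
      by_cases hi : i < L.length
      · rw [List.getElem_append_left hi, List.take_append_of_le_length (by omega)]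
        exact hcomp i hi
      · push_neg at hi
        rw [List.getElem_append_right hi]
        have htake : (L ++ L').take (i+1) = L ++ L'.take (i - L.length + 1) := by
          rw [show i + 1 = L.length + (i - L.length + 1) by omega, List.take_append,
            List.take_of_length_le (by omega), Nat.add_sub_cancel_left]
        rw [htake]
        have hset : F.edgeSet ∪ {x | x ∈ L ++ L'.take (i - L.length + 1)} =
            E ∪ {x | x ∈ L'.take (i - L.length + 1)} := by
          ext x
          simp only [hE, Set.mem_union, Set.mem_setOf_eq, List.mem_append]
          tauto
        rw [hset]
        exact hcomp' (i - L.length) (by rw [List.length_append] at h; omega)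
    · intro u v huv hu
      rw [Function.iterate_succ_apply'] at hu
      rcases hcov' u v huv hu with hx | hx
      · rcases hx with hx | hx
        · exact Or.inl hx
        · exact Or.inr (by simpa using List.mem_append.2 (Or.inl hx))
      · exact Or.inr (by simpa using List.mem_append.2 (Or.inr hx))

/-- If the set of vertices `v` with `deg_F(v) ≥ min(r, deg_G(v))`
percolates for the `r`-neighbour bootstrap process on `G`, then `F` is weakly
`(G, S_{r+1})`-saturated. -/
theorem stmt6 {V : Type*} [Fintype V] (G F : SimpleGraph V) (r : ℕ) (hr : 1 ≤ r)
    (hFG : F ≤ G)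
    (hperc : Percolates G r
      {v | min r (G.neighborSet v).ncard ≤ (F.neighborSet v).ncard}) :
    WeaklySaturated G (starGraph (r + 1)) F := by
  classical
  obtain ⟨n, hn⟩ := hperc
  obtain ⟨L, hnd, hsub, hcomp, hcov⟩ := global G F r hFG n
  refine ⟨hFG, L.length, fun i => L.get i, ?_, ?_, ?_⟩
  · exact List.nodup_iff_injective_get.1 hnd
  · ext x
    simp only [Set.mem_diff, Set.mem_range]
    constructor
    · rintro ⟨hxG, hxF⟩
      obtain ⟨a, b, hab⟩ : ∃ a b, x = s(a, b) := by
        obtain ⟨⟨a, b⟩, h⟩ := Quot.exists_rep x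
        exact ⟨a, b, h.symm⟩
      subst hab
      rcases hcov a b hxG (by rw [hn]; exact Set.mem_univ a) with h | h
      · exact absurd h hxF
      · exact List.mem_iff_get.1 h
    · rintro ⟨i, rfl⟩
      exact hsub _ (L.get_mem i)
  · intro i
    have himg : (fun j => L.get j) '' {j | j ≤ i} = {x | x ∈ L.take ((i : ℕ) + 1)} := by
      ext x
      simp only [Set.mem_image, Set.mem_setOf_eq, List.mem_take_iff_getElem]
      constructor
      · rintro ⟨j, hj, rfl⟩
        refine ⟨(j : ℕ), ?_, rfl⟩
        have := j.2
        have hji : (j : ℕ) ≤ (i : ℕ) := hj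
        simp only [lt_min_iff]
        omega
      · rintro ⟨m, hm, rfl⟩
        simp only [lt_min_iff] at hm
        exact ⟨⟨m, hm.2⟩, by simpa [Fin.le_def] using Nat.lt_succ_iff.1 hm.1, rfl⟩
    rw [himg]
    exact hcomp (i : ℕ) i.2
end

section
/- Let G and H be finite graphs and let W be a vector space. Suppose {f_e : e ∈ E(G)} is a collection of vectors in W such that for every subgraph H' of G isomorphic to H there exist nonzero scalars {c_e : e ∈ E(H')} with Σ_{e ∈ E(H')} c_e f_e = 0. Then wsat(G, H) ≥ dim(span{f_e : e ∈ E(G)}). -/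
open Finset

/-- (Balogh–Bollobás–Morris–Riordan lemma.) If to every copy of `H` in `G`
one can associate nonzero coefficients making the corresponding vectors `f_e` linearly
dependent, then `wsat(G,H) ≥ dim span{f_e : e ∈ E(G)}`. -/
theorem stmt7 {V W : Type*} [Fintype V] [Fintype W]
    (G : SimpleGraph V) (H : SimpleGraph W)
    {K : Type*} [Field K] {M : Type*} [AddCommGroup M] [Module K M]
    (f : Sym2 V → M)
    (hcond : ∀ φ : W → V, Function.Injective φ →
      (∀ a b, H.Adj a b → G.Adj (φ a) (φ b)) →
      ∃ c : Sym2 V → K, (∀ e ∈ Sym2.map φ '' H.edgeSet, c e ≠ 0) ∧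
        ∑ᶠ e ∈ Sym2.map φ '' H.edgeSet, c e • f e = 0) :
    Module.finrank K ↥(Submodule.span K (f '' G.edgeSet)) ≤ wsat G H := by
  classical
  -- the defining set of `wsat` is nonempty (take `F = G`)
  have hne : {m | ∃ F : SimpleGraph V, WeaklySaturated G H F ∧ F.edgeSet.ncard = m}.Nonempty := by
    refine ⟨G.edgeSet.ncard, G, ⟨le_refl G, 0, Fin.elim0, ?_, ?_, ?_⟩, rfl⟩
    · intro i; exact i.elim0
    · simp [Set.range_eq_empty]
    · intro i; exact i.elim0
  obtain ⟨F, hF, hFcard⟩ := Nat.sInf_mem hne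
  obtain ⟨hFG, n, e, einj, hdiff, hstep⟩ := hF
  rw [show wsat G H = F.edgeSet.ncard from hFcard.symm]
  set T : Submodule K M := Submodule.span K (f '' F.edgeSet) with hT
  -- key: every `f (e i)` lies in `T`
  have key : ∀ m : ℕ, ∀ i : Fin n, (i : ℕ) = m → f (e i) ∈ T := by
    intro m
    induction m using Nat.strong_induction_on with
    | _ m IH =>
      intro i him
      obtain ⟨φ, hφinj, hφhom, a, b, hab, hei⟩ := hstep i
      -- the intermediate graph is a subgraph of G
      have hsub : F.edgeSet ∪ e '' {j | j ≤ i} ⊆ G.edgeSet := by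
        rintro x (hx | ⟨j, -, rfl⟩)
        · exact SimpleGraph.edgeSet_mono hFG hx
        · have : e j ∈ G.edgeSet \ F.edgeSet := hdiff ▸ Set.mem_range_self j
          exact this.1
      have hGle : SimpleGraph.fromEdgeSet (F.edgeSet ∪ e '' {j | j ≤ i}) ≤ G := by
        have := SimpleGraph.fromEdgeSet_mono hsub
        rwa [SimpleGraph.fromEdgeSet_edgeSet] at this
      obtain ⟨c, hc0, hsum⟩ := hcond φ hφinj (fun a b hab => hGle (hφhom a b hab))
      set E' : Set (Sym2 V) := Sym2.map φ '' H.edgeSet with hE'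
      have hE'fin : E'.Finite := Set.toFinite _
      have heiE' : e i ∈ E' := ⟨s(a, b), hab, by rw [hei]; rfl⟩
      -- every edge of the copy other than `e i` has its vector in `T`
      have hother : ∀ x ∈ E', x ≠ e i → f x ∈ T := by
        rintro x ⟨y, hy, rfl⟩ hx
        obtain ⟨⟨a', b'⟩, rfl⟩ := y.exists_rep
        have hmap : Sym2.map φ (Quot.mk _ (a', b')) = s(φ a', φ b') := Sym2.map_pair_eq φ a' b'
        rw [hmap] at hx ⊢
        have hab' : H.Adj a' b' := hy
        have hadj := hφhom a' b' hab'
        rw [SimpleGraph.fromEdgeSet_adj] at hadj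
        rcases hadj.1 with hmem | ⟨j, hji, hj⟩
        · exact Submodule.subset_span ⟨_, hmem, rfl⟩
        · have hjlt : (j : ℕ) < m := by
            have : j ≠ i := by
              rintro rfl
              exact hx hj.symm
            have := lt_of_le_of_ne (hji : j ≤ i) this
            omega
          have := IH (j : ℕ) hjlt j rfl
          rwa [hj] at this
      -- express `f (e i)` as a combination of the others
      rw [finsum_mem_eq_finite_toFinset_sum _ hE'fin] at hsum
      have heiFin : e i ∈ hE'fin.toFinset := hE'fin.mem_toFinset.mpr heiE'
      have hsplit := Finset.add_sum_erase _ (fun x => c x • f x) heiFin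
      rw [hsum] at hsplit
      have hrest : ∑ x ∈ hE'fin.toFinset.erase (e i), c x • f x ∈ T := by
        refine Submodule.sum_mem _ fun x hx => ?_
        have hx' := Finset.mem_erase.mp hx
        exact Submodule.smul_mem _ _ (hother x (hE'fin.mem_toFinset.mp hx'.2) hx'.1)
      have hcf : c (e i) • f (e i) ∈ T := by
        have : c (e i) • f (e i) = -∑ x ∈ hE'fin.toFinset.erase (e i), c x • f x := by
          linear_combination (norm := module) hsplit
        rw [this]
        exact Submodule.neg_mem _ hrest
      have hcne : c (e i) ≠ 0 := hc0 _ heiE'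
      have : (c (e i))⁻¹ • (c (e i) • f (e i)) ∈ T := Submodule.smul_mem _ _ hcf
      rwa [smul_smul, inv_mul_cancel₀ hcne, one_smul] at this
  -- span of all of `G`'s edge vectors is contained in `T`
  have hspan : Submodule.span K (f '' G.edgeSet) ≤ T := by
    rw [Submodule.span_le]
    rintro x ⟨y, hy, rfl⟩
    by_cases hyF : y ∈ F.edgeSet
    · exact Submodule.subset_span ⟨_, hyF, rfl⟩
    · have : y ∈ Set.range e := hdiff ▸ ⟨hy, hyF⟩
      obtain ⟨i, rfl⟩ := this
      exact key (i : ℕ) i rfl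
  -- rank bound
  have hfin : FiniteDimensional K T :=
    FiniteDimensional.span_of_finite K ((Set.toFinite F.edgeSet).image f)
  calc Module.finrank K ↥(Submodule.span K (f '' G.edgeSet))
      ≤ Module.finrank K T := Submodule.finrank_mono hspan
    _ ≤ (f '' F.edgeSet).toFinset.card := finrank_span_le_card _
    _ = (f '' F.edgeSet).ncard := by
        rw [Set.ncard_eq_toFinset_card']
    _ ≤ F.edgeSet.ncard := Set.ncard_image_le (Set.toFinite _)
end

section
/- Let k ≥ ℓ ≥ 0 be integers and let X be a linear subspace of ℝ^k of dimension k − ℓ such that every nonzero x ∈ X satisfies |supp(x)| ≥ ℓ + 1. Then for every subset T ⊆ [k] with |T| = ℓ + 1, there exists a vector x ∈ X with supp(x) = T. -/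
open Finset

/-- If `X ⊆ ℝ^k` has dimension `k - ℓ` and each nonzero `x ∈ X` has support
of size at least `ℓ + 1`, then every `T ⊆ [k]` with `|T| = ℓ + 1` is the support of some
`x ∈ X`. -/
theorem stmt9 (k l : ℕ) (h : l ≤ k) (X : Submodule ℝ (Fin k → ℝ))
    (hdim : Module.finrank ℝ ↥X = k - l)
    (hsupp : ∀ x ∈ X, x ≠ 0 → l + 1 ≤ {i : Fin k | x i ≠ 0}.ncard)
    (T : Finset (Fin k)) (hT : T.card = l + 1) :
    ∃ x ∈ X, {i : Fin k | x i ≠ 0} = ↑T := by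
  classical
  -- T nonempty requires l+1 ≤ k
  have hTk : l + 1 ≤ k := by
    have := T.card_le_univ
    simpa [hT] using this
  -- restriction map to the complement of T
  set φ : (Fin k → ℝ) →ₗ[ℝ] ((↑(Tᶜ) : Set (Fin k)) → ℝ) :=
    LinearMap.funLeft ℝ ℝ (Subtype.val) with hφ
  have hφsurj : Function.Surjective φ :=
    LinearMap.funLeft_surjective_of_injective ℝ ℝ _ Subtype.val_injective
  set W : Submodule ℝ (Fin k → ℝ) := LinearMap.ker φ with hW
  have hmemW : ∀ x : Fin k → ℝ, x ∈ W ↔ ∀ i ∉ T, x i = 0 := by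
    intro x
    constructor
    · intro hx i hi
      have := congrFun hx ⟨i, by simpa using hi⟩
      simpa [hφ, LinearMap.funLeft] using this
    · intro hx
      funext i
      exact hx i.1 (by simpa using i.2)
  have hrange : LinearMap.range φ = ⊤ := LinearMap.range_eq_top.mpr hφsurj
  have hWrank : Module.finrank ℝ ↥W = l + 1 := by
    have h1 := LinearMap.finrank_range_add_finrank_ker φ
    rw [hrange] at h1
    have h2 : Module.finrank ℝ ↥(⊤ : Submodule ℝ ((↑(Tᶜ) : Set (Fin k)) → ℝ))
        = k - (l + 1) := by
      rw [finrank_top, Module.finrank_pi]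
      have he : Fintype.card (↑(Tᶜ) : Set (Fin k)) = (Tᶜ).card := by
        rw [← Nat.card_eq_fintype_card, Nat.card_coe_set_eq, Set.ncard_coe_finset]
      rw [he, Finset.card_compl, hT, Fintype.card_fin]
    have h3 : Module.finrank ℝ (Fin k → ℝ) = k := by simp
    rw [h2, h3, ← hW] at h1
    omega
  -- dim (X ⊓ W) ≥ 1
  have hsup := Submodule.finrank_sup_add_finrank_inf_eq X W
  have hsup_le : Module.finrank ℝ ↥(X ⊔ W) ≤ k := by
    simpa using Submodule.finrank_le (X ⊔ W)
  have hinf : 1 ≤ Module.finrank ℝ ↥(X ⊓ W) := by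
    rw [hdim, hWrank] at hsup
    omega
  obtain ⟨y, hy, hy0⟩ : ∃ y ∈ X ⊓ W, y ≠ (0 : Fin k → ℝ) := by
    by_contra hc
    push_neg at hc
    have : X ⊓ W = ⊥ := by
      rw [Submodule.eq_bot_iff]
      exact hc
    rw [this] at hinf
    simp at hinf
  refine ⟨y, hy.1, ?_⟩
  have hsub : {i : Fin k | y i ≠ 0} ⊆ ↑T := by
    intro i hi
    by_contra hiT
    exact hi ((hmemW y).mp hy.2 i (by simpa using hiT))
  refine Set.eq_of_subset_of_ncard_le hsub ?_ (Set.toFinite _)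
  have := hsupp y hy.1 hy0
  simpa [hT] using this
end

section
/- Let d ≥ r ≥ 0 be integers, set w := r·2^{r-1} + Σ_{j=1}^{r-1} C(d-j-1, r-j)·j·2^{j-1}, and let X be a linear subspace of ℝ^d of dimension d − r such that every nonzero x ∈ X satisfies |supp(x)| ≥ r + 1. Then there exist a spanning subgraph F of Q_d and a collection of vectors {f_e : e ∈ E(Q_d)} ⊆ ℝ^w such that: (Q1) F is weakly (Q_d, S_{r+1})-saturated and |E(F)| = w; (Q2) Σ_{i=1}^d x_i f_{e(v,i)} = 0 for every vertex v of Q_d and every x ∈ X; and (Q3) span{f_e : e ∈ E(Q_d)} = ℝ^w. -/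
open Finset

/-- `e(v,i)`: the unique edge of `Q_d` in direction `i` incident to `v`. -/
def cubeEdge {d : ℕ} (v : Fin d → Bool) (i : Fin d) : Sym2 (Fin d → Bool) :=
  s(v, Function.update v i (!v i))

namespace Aux


variable {V W : Type*}

lemma completesCopy_mono {H : SimpleGraph W} {G₁ G₂ : SimpleGraph V} {e : Sym2 V} (h : G₁ ≤ G₂)
    (hc : CompletesCopy H G₁ e) : CompletesCopy H G₂ e := by
  obtain ⟨φ, h1, h2, a, b, h3, h4⟩ := hc
  exact ⟨φ, h1, fun a b hab => h (h2 a b hab), a, b, h3, h4⟩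

lemma completesCopy_not_isDiag {H : SimpleGraph W} {G' : SimpleGraph V} {e : Sym2 V}
    (hc : CompletesCopy H G' e) : ¬ e.IsDiag := by
  obtain ⟨φ, h1, h2, a, b, h3, h4⟩ := hc
  subst h4
  simpa using (h2 a b h3).ne

/-- One legal addition step. -/
def AddStep {V W : Type*} (H : SimpleGraph W) (G₁ G₂ : SimpleGraph V) : Prop :=
  ∃ e, e ∉ G₁.edgeSet ∧ G₂ = G₁ ⊔ SimpleGraph.fromEdgeSet {e} ∧ CompletesCopy H G₂ e

lemma chain_list {H : SimpleGraph W} {F G : SimpleGraph V}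
    (h : Relation.ReflTransGen (AddStep H) F G) :
    ∃ l : List (Sym2 V), l.Nodup ∧ (∀ x ∈ l, x ∉ F.edgeSet) ∧ (∀ x ∈ l, ¬ x.IsDiag) ∧
      G = F ⊔ SimpleGraph.fromEdgeSet {x | x ∈ l} ∧
      ∀ (k : ℕ) (hk : k < l.length),
        CompletesCopy H (F ⊔ SimpleGraph.fromEdgeSet {x | x ∈ l.take (k+1)}) l[k] := by
  induction h with
  | refl =>
      refine ⟨[], by simp, by simp, by simp, ?_, by simp⟩
      simp [SimpleGraph.fromEdgeSet_empty]
  | @tail b c hab hbc ih =>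
      obtain ⟨l, hnd, hnF, hdiag, hG, hcc⟩ := ih
      obtain ⟨e, heb, hc, hcopy⟩ := hbc
      have hediag : ¬ e.IsDiag := completesCopy_not_isDiag hcopy
      have hbedge : b.edgeSet = F.edgeSet ∪ {x | x ∈ l} := by
        rw [hG, SimpleGraph.edgeSet_sup, SimpleGraph.edgeSet_fromEdgeSet]
        ext x
        simp only [Set.mem_union, Set.mem_diff, Set.mem_setOf_eq]
        constructor
        · rintro (hx | ⟨hx, -⟩) <;> tauto
        · rintro (hx | hx)
          · exact Or.inl hx
          · exact Or.inr ⟨hx, hdiag x hx⟩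
      have hel : e ∉ l := fun hmem => heb (by rw [hbedge]; exact Or.inr hmem)
      refine ⟨l ++ [e], ?_, ?_, ?_, ?_, ?_⟩
      · simpa [List.nodup_append] using ⟨hnd, fun a ha hae => hel (hae ▸ ha)⟩
      · intro x hx
        rcases List.mem_append.1 hx with hx | hx
        · exact hnF x hx
        · simp only [List.mem_singleton] at hx
          subst hx
          exact fun hxF => heb (by rw [hbedge]; exact Or.inl hxF)
      · intro x hx
        rcases List.mem_append.1 hx with hx | hx
        · exact hdiag x hx
        · simp only [List.mem_singleton] at hx; subst hx; exact hediag
      · have : {x | x ∈ l ++ [e]} = {x | x ∈ l} ∪ {e} := by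
          ext x; simp [or_comm]
        rw [hc, hG, this, SimpleGraph.fromEdgeSet_union, sup_assoc]
      · intro k hk
        simp only [List.length_append, List.length_singleton] at hk
        rcases Nat.lt_or_ge k l.length with hkl | hkl
        · have h1 : (l ++ [e]).take (k+1) = l.take (k+1) := List.take_append_of_le_length hkl
          have h2 : (l ++ [e])[k] = l[k] := List.getElem_append_left hkl
          rw [h1, h2]
          exact hcc k hkl
        · have hkeq : k = l.length := by omega
          subst hkeq
          have h2 : (l ++ [e])[l.length] = e := List.getElem_concat_length rfl (by simp)
          have h1 : (l ++ [e]).take (l.length + 1) = l ++ [e] := by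
            apply List.take_of_length_le; simp
          rw [h1, h2]
          have : F ⊔ SimpleGraph.fromEdgeSet {x | x ∈ l ++ [e]} = c := by
            have hset : {x | x ∈ l ++ [e]} = {x | x ∈ l} ∪ {e} := by
              ext x; simp [or_comm]
            rw [hset, SimpleGraph.fromEdgeSet_union, ← sup_assoc, ← hG, ← hc]
          rw [this]
          exact hcopy

lemma weaklySaturated_of_chain {H : SimpleGraph W} {F G : SimpleGraph V}
    (hFG : F ≤ G) (h : Relation.ReflTransGen (AddStep H) F G) :
    WeaklySaturated G H F := by
  obtain ⟨l, hnd, hnF, hdiag, hG, hcc⟩ := chain_list h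
  refine ⟨hFG, l.length, fun i => l[i], ?_, ?_, ?_⟩
  · exact fun i j hij => List.nodup_iff_injective_getElem.1 hnd hij
  · have hGedge : G.edgeSet = F.edgeSet ∪ {x | x ∈ l} := by
      rw [hG, SimpleGraph.edgeSet_sup, SimpleGraph.edgeSet_fromEdgeSet]
      ext x
      simp only [Set.mem_union, Set.mem_diff, Set.mem_setOf_eq]
      constructor
      · rintro (hx | ⟨hx, -⟩) <;> tauto
      · rintro (hx | hx)
        · exact Or.inl hx
        · exact Or.inr ⟨hx, hdiag x hx⟩
    ext x
    simp only [hGedge, Set.mem_diff, Set.mem_union, Set.mem_range, Set.mem_setOf_eq]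
    constructor
    · rintro ⟨hx | hx, hxF⟩
      · exact absurd hx hxF
      · obtain ⟨i, hi, hix⟩ := List.mem_iff_getElem.1 hx
        exact ⟨⟨i, hi⟩, hix⟩
    · rintro ⟨i, rfl⟩
      exact ⟨Or.inr (List.getElem_mem _), hnF _ (List.getElem_mem _)⟩
  · intro i
    have himg : (fun j : Fin l.length => l[j]) '' {j | j ≤ i} = {x | x ∈ l.take (i+1)} := by
      ext x
      simp only [Set.mem_image, Set.mem_setOf_eq]
      constructor
      · rintro ⟨j, hji, rfl⟩
        apply List.mem_take_iff_getElem.2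
        exact ⟨j, lt_min_iff.2 ⟨Nat.lt_succ_of_le (Fin.le_def.mp hji), j.isLt⟩, rfl⟩
      · intro hx
        obtain ⟨j, hj, hjx⟩ := List.mem_take_iff_getElem.1 hx
        have hjl : j < l.length := lt_of_lt_of_le hj (min_le_right _ _)
        have hji : j < i + 1 := lt_of_lt_of_le hj (min_le_left _ _)
        exact ⟨⟨j, hjl⟩, Fin.le_def.mpr (Nat.lt_succ_iff.1 hji), hjx⟩
    rw [himg, SimpleGraph.fromEdgeSet_union, SimpleGraph.fromEdgeSet_edgeSet]
    exact hcc i i.isLt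


lemma cube_adj {d : ℕ} {x y : Fin d → Bool} :
    (cube d).Adj x y ↔ ∃ i, y = Function.update x i (!x i) := by
  constructor
  · rintro ⟨i, h1, h2⟩
    refine ⟨i, funext fun j => ?_⟩
    rcases eq_or_ne j i with rfl | hj
    · simp only [Function.update_self]
      revert h1; cases x j <;> cases y j <;> simp
    · rw [Function.update_of_ne hj]
      exact (h2 j hj).symm
  · rintro ⟨i, rfl⟩
    refine ⟨i, ?_, fun j hj => ?_⟩
    · simp only [Function.update_self]; cases x i <;> simp
    · rw [Function.update_of_ne hj]

lemma cube_succ_adj {d : ℕ} {u v : Fin (d+1) → Bool} :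
    (cube (d+1)).Adj u v ↔
      (u 0 = v 0 ∧ (cube d).Adj (Fin.tail u) (Fin.tail v)) ∨
      (u 0 ≠ v 0 ∧ Fin.tail u = Fin.tail v) := by
  constructor
  · rintro ⟨i, h1, h2⟩
    induction i using Fin.cases with
    | zero =>
        exact Or.inr ⟨h1, funext fun j => h2 j.succ (Fin.succ_ne_zero j)⟩
    | succ i =>
        refine Or.inl ⟨h2 0 (Fin.succ_ne_zero i).symm, i, h1, fun j hj => ?_⟩
        exact h2 j.succ (fun hc => hj (Fin.succ_injective _ hc))
  · rintro (⟨h0, i, h1, h2⟩ | ⟨h0, ht⟩)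
    · refine ⟨i.succ, h1, fun j hj => ?_⟩
      induction j using Fin.cases with
      | zero => exact h0
      | succ j => exact h2 j (fun hc => hj (by rw [hc]))
    · refine ⟨0, h0, fun j hj => ?_⟩
      induction j using Fin.cases with
      | zero => exact absurd rfl hj
      | succ j => exact congrFun ht j

/-- embedding of the subcube with first coordinate `b`. -/
def emb (d : ℕ) (b : Bool) : (Fin d → Bool) ↪ (Fin (d+1) → Bool) :=
  ⟨fun v => Fin.cons b v, fun x y h => by
    have := congrArg Fin.tail h
    simpa only [Fin.tail_cons] using this⟩

lemma emb_apply_zero {d : ℕ} (b : Bool) (v : Fin d → Bool) : emb d b v 0 = b := by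
  show (Fin.cons b v : Fin (d+1) → Bool) 0 = b
  simp

lemma emb_tail {d : ℕ} (b : Bool) (v : Fin d → Bool) : Fin.tail (emb d b v) = v := by
  show Fin.tail (Fin.cons b v : Fin (d+1) → Bool) = v
  simp

lemma emb_tail_self {d : ℕ} {b : Bool} {u : Fin (d+1) → Bool} (hu : u 0 = b) :
    emb d b (Fin.tail u) = u := by
  subst hu
  exact Fin.cons_self_tail u

lemma map_emb_adj {d : ℕ} (b : Bool) (G : SimpleGraph (Fin d → Bool))
    {u v : Fin (d+1) → Bool} :
    (SimpleGraph.map (emb d b) G).Adj u v ↔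
      u 0 = b ∧ v 0 = b ∧ G.Adj (Fin.tail u) (Fin.tail v) := by
  rw [SimpleGraph.map_adj]
  constructor
  · rintro ⟨a, c, h, rfl, rfl⟩
    exact ⟨rfl, rfl, by rwa [emb_tail, emb_tail]⟩
  · rintro ⟨hu, hv, h⟩
    exact ⟨Fin.tail u, Fin.tail v, h, emb_tail_self hu, emb_tail_self hv⟩

/-- the set of vertical edges. -/
def vertSet (d : ℕ) : Set (Sym2 (Fin (d+1) → Bool)) :=
  Set.range (fun v : Fin d → Bool => s(emb d false v, emb d true v))

/-- the graph of vertical edges. -/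
def vert (d : ℕ) : SimpleGraph (Fin (d+1) → Bool) := SimpleGraph.fromEdgeSet (vertSet d)

lemma emb_ne {d : ℕ} (v v' : Fin d → Bool) : emb d false v ≠ emb d true v' := by
  intro h
  have := congrFun h 0
  simp [emb_apply_zero] at this

lemma vert_adj {d : ℕ} {u v : Fin (d+1) → Bool} :
    (vert d).Adj u v ↔ u 0 ≠ v 0 ∧ Fin.tail u = Fin.tail v := by
  rw [vert, SimpleGraph.fromEdgeSet_adj]
  constructor
  · rintro ⟨⟨t, ht⟩, hne⟩
    rcases Sym2.eq_iff.1 ht.symm with ⟨h1, h2⟩ | ⟨h1, h2⟩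
    · subst h1; subst h2
      refine ⟨by simp [emb_apply_zero], by rw [emb_tail, emb_tail]⟩
    · subst h1; subst h2
      refine ⟨by simp [emb_apply_zero], by rw [emb_tail, emb_tail]⟩
  · rintro ⟨h0, ht⟩
    have hne : u ≠ v := fun hc => h0 (by rw [hc])
    refine ⟨⟨Fin.tail u, ?_⟩, hne⟩
    rcases Bool.eq_false_or_eq_true (u 0) with hu | hu
    · have hv : v 0 = false := by revert h0; rw [hu]; cases v 0 <;> simp
      have h1 : emb d true (Fin.tail u) = u := emb_tail_self hu
      have h2 : emb d false (Fin.tail u) = v := by rw [ht]; exact emb_tail_self hv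
      dsimp only
      rw [h1, h2, Sym2.eq_swap]
    · have hv : v 0 = true := by revert h0; rw [hu]; cases v 0 <;> simp
      have h1 : emb d false (Fin.tail u) = u := emb_tail_self hu
      have h2 : emb d true (Fin.tail u) = v := by rw [ht]; exact emb_tail_self hv
      dsimp only
      rw [h1, h2]

lemma cube_succ_decomp (d : ℕ) :
    cube (d+1) = SimpleGraph.map (emb d false) (cube d) ⊔ SimpleGraph.map (emb d true) (cube d)
      ⊔ vert d := by
  ext u v
  rw [SimpleGraph.sup_adj, SimpleGraph.sup_adj, cube_succ_adj, map_emb_adj, map_emb_adj, vert_adj]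
  constructor
  · rintro (⟨h0, h⟩ | ⟨h0, ht⟩)
    · rcases Bool.eq_false_or_eq_true (u 0) with hu | hu
      · exact Or.inl (Or.inr ⟨hu, by rw [← h0]; exact hu, h⟩)
      · exact Or.inl (Or.inl ⟨hu, by rw [← h0]; exact hu, h⟩)
    · exact Or.inr ⟨h0, ht⟩
  · rintro ((⟨h1, h2, h⟩ | ⟨h1, h2, h⟩) | ⟨h0, ht⟩)
    · exact Or.inl ⟨by rw [h1, h2], h⟩
    · exact Or.inl ⟨by rw [h1, h2], h⟩
    · exact Or.inr ⟨h0, ht⟩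




def Lfun (d r : ℕ) : ℕ := ∑ s ∈ Finset.range (d+1), Nat.choose d s * (r - s)

lemma Lfun_zero (d : ℕ) : Lfun d 0 = 0 := by simp [Lfun]

lemma Lfun_succ (d r : ℕ) : Lfun (d+1) r = Lfun d r + Lfun d (r-1) := by
  have e1 : Lfun (d+1) r
      = (∑ s ∈ Finset.range (d+1), Nat.choose (d+1) (s+1) * (r - (s+1)))
        + Nat.choose (d+1) 0 * (r - 0) := by
    rw [Lfun, Finset.sum_range_succ']
  have e2 : ∀ s ∈ Finset.range (d+1), Nat.choose (d+1) (s+1) * (r - (s+1))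
      = Nat.choose d s * ((r-1) - s) + Nat.choose d (s+1) * (r - (s+1)) := by
    intro s _
    rw [Nat.choose_succ_succ, Nat.add_mul]
    congr 2
    omega
  have e4 : (∑ s ∈ Finset.range (d+1), Nat.choose d (s+1) * (r - (s+1)))
      + Nat.choose (d+1) 0 * (r - 0) = Lfun d r := by
    have h0 : Nat.choose (d+1) 0 * (r - 0) = Nat.choose d 0 * (r - 0) := by simp
    rw [h0, ← Finset.sum_range_succ' (fun s => Nat.choose d s * (r - s)) (d+1)]
    rw [Lfun, Finset.sum_range_succ]
    simp
  have e3 : (∑ s ∈ Finset.range (d+1), Nat.choose d s * ((r-1) - s)) = Lfun d (r-1) := rfl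
  rw [e1, Finset.sum_congr rfl e2, Finset.sum_add_distrib, add_assoc, e4, e3]
  exact add_comm _ _

lemma Lfun_self (d : ℕ) : Lfun d d = d * 2^(d-1) := by
  induction d with
  | zero => simp [Lfun]
  | succ d ih =>
      have h1 : Lfun d (d+1) = Lfun d d + 2^d := by
        have hc : ∀ s ∈ Finset.range (d+1), Nat.choose d s * ((d+1) - s)
            = Nat.choose d s * (d - s) + Nat.choose d s := by
          intro s hs
          rw [Finset.mem_range] at hs
          have h : (d+1) - s = (d - s) + 1 := by omega
          rw [h, Nat.mul_succ]
        rw [Lfun, Finset.sum_congr rfl hc, Finset.sum_add_distrib, Nat.sum_range_choose]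
        rfl
      have h2 : (d+1) - 1 = d := by omega
      rw [Lfun_succ, h2, h1, ih]
      rcases d with _ | k
      · norm_num
      · simp only [Nat.add_sub_cancel]
        rw [pow_succ]
        ring

theorem Lfun_eq (d r : ℕ) (h : r ≤ d) :
    Lfun d r = r * 2 ^ (r - 1) +
      ∑ j ∈ Finset.Icc 1 (r - 1), Nat.choose (d - j - 1) (r - j) * j * 2 ^ (j - 1) := by
  induction d generalizing r with
  | zero =>
      interval_cases r
      simp [Lfun]
  | succ d ih =>
      rcases Nat.eq_zero_or_pos r with rfl | hr
      · simp [Lfun_zero]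
      rcases eq_or_lt_of_le h with heq | hlt
      · subst heq
        rw [Lfun_self]
        have hz : ∀ j ∈ Finset.Icc 1 ((d+1)-1),
            Nat.choose ((d+1)-j-1) ((d+1)-j) * j * 2^(j-1) = 0 := by
          intro j hj
          rw [Finset.mem_Icc] at hj
          have hlt2 : (d+1)-j-1 < (d+1)-j := by omega
          rw [Nat.choose_eq_zero_of_lt hlt2, zero_mul, zero_mul]
        rw [Finset.sum_congr rfl hz, Finset.sum_const_zero]
        simp
      · have hrd : r ≤ d := by omega
        rw [Lfun_succ, ih r hrd, ih (r-1) (by omega)]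
        -- now an identity about the R-side
        have pascal : ∀ j ∈ Finset.Icc 1 (r-1),
            Nat.choose ((d+1)-j-1) (r-j) * j * 2^(j-1)
            = Nat.choose (d-j-1) (r-j-1) * j * 2^(j-1)
              + Nat.choose (d-j-1) (r-j) * j * 2^(j-1) := by
          intro j hj
          rw [Finset.mem_Icc] at hj
          obtain ⟨b, hb⟩ : ∃ b, r - j = b + 1 := ⟨r - j - 1, by omega⟩
          obtain ⟨a, ha⟩ : ∃ a, d - j = a + 1 := ⟨d - j - 1, by omega⟩
          have h1 : (d+1)-j-1 = a+1 := by omega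
          have h2 : d-j-1 = a := by omega
          have h3 : r-j-1 = b := by omega
          rw [h1, h2, h3, hb, Nat.choose_succ_succ, Nat.add_mul, Nat.add_mul]
        rw [Finset.sum_congr rfl pascal, Finset.sum_add_distrib]
        have hstep : ∑ j ∈ Finset.Icc 1 (r-1), Nat.choose (d-j-1) (r-j-1) * j * 2^(j-1)
            = (r-1) * 2^(r-1-1)
              + ∑ j ∈ Finset.Icc 1 (r-1-1), Nat.choose (d-j-1) (r-1-j) * j * 2^(j-1) := by
          rcases Nat.lt_or_ge r 2 with hr2 | hr2
          · interval_cases r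
            simp
          · have hb : r - 1 = (r-2) + 1 := by omega
            conv_lhs => rw [hb, Finset.sum_Icc_succ_top (by omega)]
            have hlast : Nat.choose (d-(r-2+1)-1) (r-(r-2+1)-1) * (r-2+1) * 2^((r-2+1)-1)
                = (r-1) * 2^(r-1-1) := by
              have h1 : r-(r-2+1)-1 = 0 := by omega
              rw [h1, Nat.choose_zero_right, one_mul]
              have e : r-2+1 = r-1 := by omega
              rw [e]
            rw [hlast]
            have hcong : ∀ j ∈ Finset.Icc 1 (r-2),
                Nat.choose (d-j-1) (r-j-1) * j * 2^(j-1)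
                = Nat.choose (d-j-1) (r-1-j) * j * 2^(j-1) := by
              intro j hj
              have e : r - j - 1 = r - 1 - j := by omega
              rw [e]
            rw [Finset.sum_congr rfl hcong]
            have hb2 : r - 1 - 1 = r - 2 := by omega
            rw [hb2]
            exact add_comm _ _
        rw [hstep]
        ring

-- counting lemmas
lemma edgeSet_map {V W : Type*} (f : V ↪ W) (G : SimpleGraph V) :
    (SimpleGraph.map f G).edgeSet = Sym2.map f '' G.edgeSet := by
  ext e
  induction e using Sym2.ind with
  | _ u v =>
    simp only [SimpleGraph.mem_edgeSet, SimpleGraph.map_adj, Set.mem_image]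
    constructor
    · rintro ⟨a, b, hab, rfl, rfl⟩
      exact ⟨s(a, b), hab, Sym2.map_pair_eq f a b⟩
    · rintro ⟨e', he', hmap⟩
      induction e' using Sym2.ind with
      | _ a b =>
        rw [Sym2.map_pair_eq] at hmap
        rcases Sym2.eq_iff.1 hmap with ⟨h1, h2⟩ | ⟨h1, h2⟩
        · exact ⟨a, b, he', h1, h2⟩
        · exact ⟨b, a, (SimpleGraph.mem_edgeSet _).1 ((Sym2.eq_swap ▸ he' : _)), h2, h1⟩

lemma ncard_edgeSet_map {V W : Type*} (f : V ↪ W) (G : SimpleGraph V) :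
    (SimpleGraph.map f G).edgeSet.ncard = G.edgeSet.ncard := by
  rw [edgeSet_map]
  exact Set.ncard_image_of_injective _ (Sym2.map.injective f.injective)

lemma vert_edgeSet (d : ℕ) : (vert d).edgeSet = vertSet d := by
  rw [vert, SimpleGraph.edgeSet_fromEdgeSet]
  ext e
  simp only [Set.mem_diff, Set.mem_setOf_eq, and_iff_left_iff_imp]
  rintro ⟨t, rfl⟩
  simp only [Sym2.isDiag_iff_proj_eq]
  exact fun h => emb_ne t t h

lemma ncard_vertSet (d : ℕ) : (vertSet d).ncard = 2^d := by
  have hinj : Function.Injective (fun v : Fin d → Bool => s(emb d false v, emb d true v)) := by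
    intro v v' h
    rcases Sym2.eq_iff.1 h with ⟨h1, _⟩ | ⟨h1, _⟩
    · exact (emb d false).injective h1
    · exact absurd h1 (emb_ne v v')
  rw [vertSet, ← Set.image_univ, Set.ncard_image_of_injective _ hinj, Set.ncard_univ,
    Nat.card_eq_fintype_card]
  simp

lemma map_edge_coord {d : ℕ} (b : Bool) (G : SimpleGraph (Fin d → Bool))
    {u v : Fin (d+1) → Bool} (h : (SimpleGraph.map (emb d b) G).Adj u v) :
    u 0 = b ∧ v 0 = b ∧ Fin.tail u ≠ Fin.tail v := by
  rw [map_emb_adj] at h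
  exact ⟨h.1, h.2.1, h.2.2.ne⟩

lemma disj_bt {d : ℕ} (G₁ G₂ : SimpleGraph (Fin d → Bool)) :
    Disjoint (SimpleGraph.map (emb d false) G₁).edgeSet
      (SimpleGraph.map (emb d true) G₂).edgeSet := by
  rw [Set.disjoint_left]
  intro e h1 h2
  induction e using Sym2.ind with
  | _ u v =>
    rw [SimpleGraph.mem_edgeSet] at h1 h2
    have := (map_edge_coord false G₁ h1).1
    have := (map_edge_coord true G₂ h2).1
    simp_all

lemma disj_vert {d : ℕ} (b : Bool) (G : SimpleGraph (Fin d → Bool)) :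
    Disjoint (SimpleGraph.map (emb d b) G).edgeSet (vert d).edgeSet := by
  rw [Set.disjoint_left]
  intro e h1 h2
  induction e using Sym2.ind with
  | _ u v =>
    rw [SimpleGraph.mem_edgeSet] at h1 h2
    exact (map_edge_coord b G h1).2.2 (vert_adj.1 h2).2

lemma cube_zero_edgeSet : (cube 0).edgeSet = ∅ := by
  ext e
  induction e using Sym2.ind with
  | _ u v =>
    simp only [SimpleGraph.mem_edgeSet, Set.mem_empty_iff_false, iff_false]
    rintro ⟨i, -, -⟩
    exact i.elim0

lemma ncard_cube_edgeSet : ∀ d : ℕ, (cube d).edgeSet.ncard = d * 2^(d-1)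
  | 0 => by simp [cube_zero_edgeSet]
  | (d+1) => by
      rw [cube_succ_decomp d, SimpleGraph.edgeSet_sup, SimpleGraph.edgeSet_sup]
      rw [Set.ncard_union_eq
        (Set.disjoint_union_left.2 ⟨disj_vert false _, disj_vert true _⟩)
        (Set.toFinite _) (Set.toFinite _)]
      rw [Set.ncard_union_eq (disj_bt _ _) (Set.toFinite _) (Set.toFinite _)]
      rw [ncard_edgeSet_map, ncard_edgeSet_map, vert_edgeSet, ncard_vertSet,
        ncard_cube_edgeSet d]
      rcases d with _ | k
      · norm_num
      · simp only [Nat.add_sub_cancel]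
        rw [pow_succ]
        ring

-- lifting lemmas
lemma map_sup_fromEdgeSet_single {V W : Type*} (f : V ↪ W) (G : SimpleGraph V) (a b : V) :
    SimpleGraph.map f (G ⊔ SimpleGraph.fromEdgeSet {s(a, b)})
      = SimpleGraph.map f G ⊔ SimpleGraph.fromEdgeSet {s(f a, f b)} := by
  ext u v
  rw [SimpleGraph.map_adj, SimpleGraph.sup_adj, SimpleGraph.map_adj,
    SimpleGraph.fromEdgeSet_adj]
  constructor
  · rintro ⟨x, y, hxy | hxy, rfl, rfl⟩
    · exact Or.inl ⟨x, y, hxy, rfl, rfl⟩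
    · rw [SimpleGraph.fromEdgeSet_adj, Set.mem_singleton_iff] at hxy
      obtain ⟨hm, hne⟩ := hxy
      refine Or.inr ⟨?_, fun h => hne (f.injective h)⟩
      rw [Set.mem_singleton_iff]
      rcases Sym2.eq_iff.1 hm with ⟨rfl, rfl⟩ | ⟨rfl, rfl⟩
      · rfl
      · exact Sym2.eq_swap
  · rintro (⟨x, y, h, rfl, rfl⟩ | ⟨hm, hne⟩)
    · exact ⟨x, y, Or.inl h, rfl, rfl⟩
    · rw [Set.mem_singleton_iff] at hm
      rcases Sym2.eq_iff.1 hm with ⟨h1, h2⟩ | ⟨h1, h2⟩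
      · refine ⟨a, b, Or.inr ?_, h1.symm, h2.symm⟩
        rw [SimpleGraph.fromEdgeSet_adj]
        exact ⟨rfl, fun h => hne (by rw [h1, h2, h])⟩
      · refine ⟨b, a, Or.inr ?_, h1.symm, h2.symm⟩
        rw [SimpleGraph.fromEdgeSet_adj]
        refine ⟨Sym2.eq_swap, fun h => hne (by rw [h1, h2, h])⟩

lemma addStep_lift {V W U : Type*} (ι : V ↪ W) (C : SimpleGraph W)
    (hC : ∀ a b : V, ¬ C.Adj (ι a) (ι b))
    {H : SimpleGraph U} {G₁ G₂ : SimpleGraph V}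
    (h : AddStep H G₁ G₂) :
    AddStep H (C ⊔ SimpleGraph.map ι G₁) (C ⊔ SimpleGraph.map ι G₂) := by
  obtain ⟨e, he, hG2, hcopy⟩ := h
  revert he hG2 hcopy
  induction e using Sym2.ind with
  | _ a b =>
    intro he hG2 hcopy
    refine ⟨s(ι a, ι b), ?_, ?_, ?_⟩
    · rw [SimpleGraph.mem_edgeSet, SimpleGraph.sup_adj]
      rintro (hc | hc)
      · exact hC a b hc
      · rw [SimpleGraph.map_adj] at hc
        obtain ⟨x, y, hxy, hx, hy⟩ := hc
        rw [← ι.injective hx, ← ι.injective hy] at he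
        exact he ((SimpleGraph.mem_edgeSet _).2 hxy)
    · rw [hG2, map_sup_fromEdgeSet_single, sup_assoc]
    · obtain ⟨φ, hinj, hhom, x, y, hxy, heq⟩ := hcopy
      refine ⟨fun p => ι (φ p), fun p q hpq => hinj (ι.injective hpq), ?_, x, y, hxy, ?_⟩
      · intro p q hpq
        exact Or.inr ((SimpleGraph.map_adj ι G₂ _ _).2 ⟨φ p, φ q, hhom p q hpq, rfl, rfl⟩)
      · have := congrArg (Sym2.map ι) heq
        rwa [Sym2.map_pair_eq, Sym2.map_pair_eq] at this

lemma chain_lift {V W U : Type*} (ι : V ↪ W) (C : SimpleGraph W)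
    (hC : ∀ a b : V, ¬ C.Adj (ι a) (ι b))
    {H : SimpleGraph U} {G₁ G₂ : SimpleGraph V}
    (h : Relation.ReflTransGen (AddStep H) G₁ G₂) :
    Relation.ReflTransGen (AddStep H) (C ⊔ SimpleGraph.map ι G₁) (C ⊔ SimpleGraph.map ι G₂) :=
  Relation.ReflTransGen.lift (fun G => C ⊔ SimpleGraph.map ι G)
    (fun _ _ hab => addStep_lift ι C hC hab) _ _ h

lemma addStep_lift_star {V W : Type*} (ι : V ↪ W) (C : SimpleGraph W)
    (hC : ∀ a b : V, ¬ C.Adj (ι a) (ι b)) (β : V → W)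
    (hβ1 : ∀ v, C.Adj (ι v) (β v)) (hβ2 : ∀ v w, β v ≠ ι w)
    {r : ℕ} {G₁ G₂ : SimpleGraph V}
    (h : AddStep (starGraph r) G₁ G₂) :
    AddStep (starGraph (r+1)) (C ⊔ SimpleGraph.map ι G₁) (C ⊔ SimpleGraph.map ι G₂) := by
  obtain ⟨e, he, hG2, hcopy⟩ := h
  revert he hG2 hcopy
  induction e using Sym2.ind with
  | _ a b =>
    intro he hG2 hcopy
    refine ⟨s(ι a, ι b), ?_, ?_, ?_⟩
    · rw [SimpleGraph.mem_edgeSet, SimpleGraph.sup_adj]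
      rintro (hc | hc)
      · exact hC a b hc
      · rw [SimpleGraph.map_adj] at hc
        obtain ⟨x, y, hxy, hx, hy⟩ := hc
        rw [← ι.injective hx, ← ι.injective hy] at he
        exact he ((SimpleGraph.mem_edgeSet _).2 hxy)
    · rw [hG2, map_sup_fromEdgeSet_single, sup_assoc]
    · obtain ⟨φ, hinj, hhom, x, y, hxy, heq⟩ := hcopy
      set ψ : Fin (r+1+1) → W := Fin.snoc (fun p => ι (φ p)) (β (φ 0)) with hψ
      have hψc : ∀ p : Fin (r+1), ψ (Fin.castSucc p) = ι (φ p) := by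
        intro p; simp [hψ]
      have hψl : ψ (Fin.last (r+1)) = β (φ 0) := by simp [hψ]
      have hψinj : Function.Injective ψ := by
        intro p q hpq
        induction p using Fin.lastCases with
        | last =>
            induction q using Fin.lastCases with
            | last => rfl
            | cast q =>
                rw [hψl, hψc] at hpq
                exact absurd hpq (hβ2 _ _)
        | cast p =>
            induction q using Fin.lastCases with
            | last =>
                rw [hψl, hψc] at hpq
                exact absurd hpq.symm (hβ2 _ _)
            | cast q =>
                rw [hψc, hψc] at hpq
                rw [hinj (ι.injective hpq)]
      have hadj0 : ∀ q : Fin (r+1+1), q ≠ 0 →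
          (C ⊔ SimpleGraph.map ι G₂).Adj (ψ 0) (ψ q) := by
        intro q hq
        have h0 : ψ 0 = ι (φ 0) := by
          rw [← Fin.castSucc_zero, hψc]
        induction q using Fin.lastCases with
        | last =>
            rw [h0, hψl]
            exact Or.inl (hβ1 (φ 0))
        | cast q =>
            have hq' : q ≠ 0 := by
              intro hc
              apply hq
              rw [hc, Fin.castSucc_zero]
            rw [h0, hψc]
            refine Or.inr ((SimpleGraph.map_adj ι G₂ _ _).2 ⟨φ 0, φ q, ?_, rfl, rfl⟩)
            exact hhom 0 q (Or.inl ⟨rfl, hq'⟩)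
      refine ⟨ψ, hψinj, ?_, Fin.castSucc x, Fin.castSucc y, ?_, ?_⟩
      · rintro p q (⟨rfl, hq⟩ | ⟨rfl, hp⟩)
        · exact hadj0 q hq
        · exact ((C ⊔ SimpleGraph.map ι G₂).adj_symm (hadj0 p hp))
      · rcases hxy with ⟨hx0, hy0⟩ | ⟨hy0, hx0⟩
        · exact Or.inl ⟨by rw [hx0, Fin.castSucc_zero],
            fun hc => hy0 (by rwa [← Fin.castSucc_zero, Fin.castSucc_inj] at hc)⟩
        · exact Or.inr ⟨by rw [hy0, Fin.castSucc_zero],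
            fun hc => hx0 (by rwa [← Fin.castSucc_zero, Fin.castSucc_inj] at hc)⟩
      · rw [hψc, hψc]
        have := congrArg (Sym2.map ι) heq
        rwa [Sym2.map_pair_eq, Sym2.map_pair_eq] at this

lemma chain_lift_star {V W : Type*} (ι : V ↪ W) (C : SimpleGraph W)
    (hC : ∀ a b : V, ¬ C.Adj (ι a) (ι b)) (β : V → W)
    (hβ1 : ∀ v, C.Adj (ι v) (β v)) (hβ2 : ∀ v w, β v ≠ ι w)
    {r : ℕ} {G₁ G₂ : SimpleGraph V}
    (h : Relation.ReflTransGen (AddStep (starGraph r)) G₁ G₂) :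
    Relation.ReflTransGen (AddStep (starGraph (r+1)))
      (C ⊔ SimpleGraph.map ι G₁) (C ⊔ SimpleGraph.map ι G₂) :=
  Relation.ReflTransGen.lift (fun G => C ⊔ SimpleGraph.map ι G)
    (fun _ _ hab => addStep_lift_star ι C hC β hβ1 hβ2 hab) _ _ h

lemma chain_addSet {V U : Type*} {H : SimpleGraph U} {G : SimpleGraph V} (s : Finset (Sym2 V))
    (hcc : ∀ e ∈ s, CompletesCopy H (G ⊔ SimpleGraph.fromEdgeSet {e}) e) :
    Relation.ReflTransGen (AddStep H) G (G ⊔ SimpleGraph.fromEdgeSet ↑s) := by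
  classical
  induction s using Finset.induction with
  | empty =>
      rw [Finset.coe_empty, SimpleGraph.fromEdgeSet_empty, sup_bot_eq]
  | @insert a s ha ih =>
      have hchain := ih (fun e he => hcc e (Finset.mem_insert_of_mem he))
      have hsplit : G ⊔ SimpleGraph.fromEdgeSet ↑(insert a s)
          = (G ⊔ SimpleGraph.fromEdgeSet ↑s) ⊔ SimpleGraph.fromEdgeSet {a} := by
        rw [Finset.coe_insert, Set.insert_eq, SimpleGraph.fromEdgeSet_union, sup_assoc,
          sup_comm (SimpleGraph.fromEdgeSet {a}) _, ← sup_assoc]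
      by_cases hmem : a ∈ (G ⊔ SimpleGraph.fromEdgeSet ↑s).edgeSet
      · have habs : SimpleGraph.fromEdgeSet {a} ≤ G ⊔ SimpleGraph.fromEdgeSet ↑s := by
          intro u v huv
          rw [SimpleGraph.fromEdgeSet_adj, Set.mem_singleton_iff] at huv
          rw [← SimpleGraph.mem_edgeSet]
          rw [← huv.1] at hmem
          exact hmem
        rw [hsplit, sup_eq_left.2 habs]
        exact hchain
      · refine hchain.tail ⟨a, hmem, hsplit, ?_⟩
        have hmono : G ⊔ SimpleGraph.fromEdgeSet {a}
            ≤ G ⊔ SimpleGraph.fromEdgeSet ↑(insert a s) := by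
          apply sup_le_sup_left
          apply SimpleGraph.fromEdgeSet_mono
          simp
        exact completesCopy_mono hmono (hcc a (Finset.mem_insert_self a s))

lemma flip_ne {d : ℕ} (x : Fin d → Bool) (i : Fin d) : Function.update x i (!x i) ≠ x := by
  intro h
  have := congrFun h i
  simp at this

lemma flip_inj {d : ℕ} (x : Fin d → Bool) {i j : Fin d} (hij : i ≠ j) :
    Function.update x i (!x i) ≠ Function.update x j (!x j) := by
  intro h
  have h1 := congrFun h i
  rw [Function.update_self, Function.update_of_ne hij] at h1
  simp at h1

lemma key : ∀ d r : ℕ, r ≤ d → ∃ F : SimpleGraph (Fin d → Bool),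
    F ≤ cube d ∧ Relation.ReflTransGen (AddStep (starGraph (r+1))) F (cube d) ∧
    F.edgeSet.ncard = Lfun d r := by
  intro d
  induction d with
  | zero =>
      intro r hr
      interval_cases r
      exact ⟨cube 0, le_rfl, Relation.ReflTransGen.refl,
        by simp [cube_zero_edgeSet, Lfun_zero]⟩
  | succ d ih =>
      intro r hr
      rcases Nat.eq_zero_or_pos r with rfl | hrpos
      · -- r = 0 : start from the empty graph
        refine ⟨⊥, bot_le, ?_, by simp [Lfun_zero]⟩
        have hfin : (cube (d+1)).edgeSet.Finite := Set.toFinite _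
        have hcc : ∀ e ∈ hfin.toFinset,
            CompletesCopy (starGraph 1)
              ((⊥ : SimpleGraph (Fin (d+1) → Bool)) ⊔ SimpleGraph.fromEdgeSet {e}) e := by
          intro e he
          rw [Set.Finite.mem_toFinset] at he
          revert he
          induction e using Sym2.ind with
          | _ u v =>
            intro he
            rw [SimpleGraph.mem_edgeSet] at he
            have hne : u ≠ v := he.ne
            refine ⟨![u, v], ?_, ?_, 0, 1, Or.inl ⟨rfl, by decide⟩, by simp⟩
            · intro p q hpq
              fin_cases p <;> fin_cases q <;> simp_all
            · rintro p q (⟨rfl, hq⟩ | ⟨rfl, hp⟩)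
              · fin_cases q
                · exact absurd rfl hq
                · refine Or.inr ?_
                  rw [SimpleGraph.fromEdgeSet_adj]
                  simpa using hne
              · fin_cases p
                · exact absurd rfl hp
                · refine Or.inr ?_
                  rw [SimpleGraph.fromEdgeSet_adj]
                  simp only [Set.mem_singleton_iff, Matrix.cons_val_one, Matrix.head_cons,
                    Matrix.cons_val_zero]
                  exact ⟨Sym2.eq_swap, hne.symm⟩
        have hchain := chain_addSet (H := starGraph 1)
          (G := (⊥ : SimpleGraph (Fin (d+1) → Bool))) hfin.toFinset hcc
        have heq : (⊥ : SimpleGraph (Fin (d+1) → Bool)) ⊔ SimpleGraph.fromEdgeSet ↑hfin.toFinset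
            = cube (d+1) := by
          rw [Set.Finite.coe_toFinset, bot_sup_eq, SimpleGraph.fromEdgeSet_edgeSet]
        rwa [heq] at hchain
      rcases eq_or_lt_of_le hr with heq | hlt
      · -- r = d+1
        subst heq
        exact ⟨cube (d+1), le_rfl, Relation.ReflTransGen.refl,
          by rw [ncard_cube_edgeSet (d+1), Lfun_self]⟩
      · -- 1 ≤ r ≤ d
        have hrd : r ≤ d := by omega
        obtain ⟨Fb, hFb, chb, cntb⟩ := ih r hrd
        obtain ⟨Ft, hFt, cht, cntt⟩ := ih (r-1) (by omega)
        rw [show r - 1 + 1 = r from by omega] at cht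
        refine ⟨SimpleGraph.map (emb d false) Fb ⊔ SimpleGraph.map (emb d true) Ft, ?_, ?_, ?_⟩
        · rw [cube_succ_decomp]
          exact sup_le
            (le_sup_of_le_left (le_sup_of_le_left (SimpleGraph.map_monotone _ hFb)))
            (le_sup_of_le_left (le_sup_of_le_right (SimpleGraph.map_monotone _ hFt)))
        · -- the chain
          have hC1 : ∀ a b : Fin d → Bool,
              ¬ (SimpleGraph.map (emb d true) Ft).Adj (emb d false a) (emb d false b) := by
            intro a b hc
            have h1 := (map_edge_coord true Ft hc).1
            rw [emb_apply_zero] at h1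
            exact Bool.noConfusion h1
          have p1 := chain_lift (emb d false) (SimpleGraph.map (emb d true) Ft) hC1 chb
          -- phase 2 : vertical edges
          have hvfin : (vertSet d).Finite := Set.toFinite _
          have hcc2 : ∀ e ∈ hvfin.toFinset,
              CompletesCopy (starGraph (r+1))
                ((SimpleGraph.map (emb d true) Ft ⊔ SimpleGraph.map (emb d false) (cube d))
                  ⊔ SimpleGraph.fromEdgeSet {e}) e := by
            intro e he
            rw [Set.Finite.mem_toFinset] at he
            obtain ⟨t, rfl⟩ := he
            show CompletesCopy _ _ s(emb d false t, emb d true t)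
            set G' := (SimpleGraph.map (emb d true) Ft ⊔ SimpleGraph.map (emb d false) (cube d))
              ⊔ SimpleGraph.fromEdgeSet {s(emb d false t, emb d true t)} with hG'
            set φ : Fin (r+1+1) → (Fin (d+1) → Bool) :=
              Fin.cons (emb d false t)
                (Fin.snoc
                  (fun j : Fin r => emb d false
                    (Function.update t (Fin.castLE hrd j) (!t (Fin.castLE hrd j))))
                  (emb d true t)) with hφ
            have hφ0 : φ 0 = emb d false t := rfl
            have hφc : ∀ j : Fin r, φ (Fin.succ (Fin.castSucc j))
                = emb d false (Function.update t (Fin.castLE hrd j) (!t (Fin.castLE hrd j))) := by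
              intro j
              simp [hφ]
            have hφl : φ (Fin.succ (Fin.last r)) = emb d true t := by
              rw [hφ, Fin.cons_succ, Fin.snoc_last]
            have hadj : ∀ q : Fin (r+1+1), q ≠ 0 → G'.Adj (φ 0) (φ q) := by
              intro q hq
              induction q using Fin.cases with
              | zero => exact absurd rfl hq
              | succ q' =>
                  induction q' using Fin.lastCases with
                  | last =>
                      rw [hφ0, hφl]
                      refine Or.inr ?_
                      rw [SimpleGraph.fromEdgeSet_adj]
                      exact ⟨rfl, emb_ne t t⟩
                  | cast j =>
                      rw [hφ0, hφc]
                      refine Or.inl (Or.inr ?_)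
                      rw [SimpleGraph.map_adj]
                      refine ⟨t, _, ?_, rfl, rfl⟩
                      exact cube_adj.2 ⟨Fin.castLE hrd j, rfl⟩
            refine ⟨φ, ?_, ?_, 0, Fin.succ (Fin.last r), Or.inl ⟨rfl, Fin.succ_ne_zero _⟩, ?_⟩
            · -- injectivity
              intro p q hpq
              induction p using Fin.cases with
              | zero =>
                  induction q using Fin.cases with
                  | zero => rfl
                  | succ q' =>
                      exfalso
                      induction q' using Fin.lastCases with
                      | last =>
                          rw [hφ0, hφl] at hpq
                          exact emb_ne t t hpq
                      | cast j =>
                          rw [hφ0, hφc] at hpq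
                          exact flip_ne t _ ((emb d false).injective hpq).symm
              | succ p' =>
                  induction q using Fin.cases with
                  | zero =>
                      exfalso
                      induction p' using Fin.lastCases with
                      | last =>
                          rw [hφ0, hφl] at hpq
                          exact emb_ne t t hpq.symm
                      | cast j =>
                          rw [hφ0, hφc] at hpq
                          exact flip_ne t _ ((emb d false).injective hpq)
                  | succ q' =>
                      induction p' using Fin.lastCases with
                      | last =>
                          induction q' using Fin.lastCases with
                          | last => rfl
                          | cast j =>
                              rw [hφl, hφc] at hpq
                              exact absurd hpq.symm (emb_ne _ _)
                      | cast j =>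
                          induction q' using Fin.lastCases with
                          | last =>
                              rw [hφl, hφc] at hpq
                              exact absurd hpq (emb_ne _ _)
                          | cast j' =>
                              rw [hφc, hφc] at hpq
                              have h2 := (emb d false).injective hpq
                              rcases eq_or_ne j j' with rfl | hne
                              · rfl
                              · exact absurd h2
                                  (flip_inj t (fun hc => hne
                                    (Fin.castLE_injective hrd (by exact hc))))
            · rintro p q (⟨rfl, hq⟩ | ⟨rfl, hp⟩)
              · exact hadj q hq
              · exact G'.adj_symm (hadj p hp)
            · rw [hφ0, hφl]
          have p2 := chain_addSet (H := starGraph (r+1))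
            (G := SimpleGraph.map (emb d true) Ft ⊔ SimpleGraph.map (emb d false) (cube d))
            hvfin.toFinset hcc2
          -- phase 3
          have hC3 : ∀ a b : Fin d → Bool,
              ¬ (SimpleGraph.map (emb d false) (cube d) ⊔ vert d).Adj
                (emb d true a) (emb d true b) := by
            intro a b hc
            rcases hc with hc | hc
            · have h1 := (map_edge_coord false (cube d) hc).1
              rw [emb_apply_zero] at h1
              exact Bool.noConfusion h1
            · have h1 := (vert_adj.1 hc).1
              rw [emb_apply_zero, emb_apply_zero] at h1
              exact h1 rfl
          have hβ1 : ∀ v : Fin d → Bool,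
              (SimpleGraph.map (emb d false) (cube d) ⊔ vert d).Adj
                (emb d true v) (emb d false v) := by
            intro v
            refine Or.inr (vert_adj.2 ⟨?_, by rw [emb_tail, emb_tail]⟩)
            rw [emb_apply_zero, emb_apply_zero]
            simp
          have hβ2 : ∀ v w : Fin d → Bool, emb d false v ≠ emb d true w :=
            fun v w => emb_ne v w
          have p3 := chain_lift_star (emb d true)
            (SimpleGraph.map (emb d false) (cube d) ⊔ vert d) hC3
            (fun v => emb d false v) hβ1 hβ2 cht
          -- glue
          have E2 : (SimpleGraph.map (emb d true) Ft ⊔ SimpleGraph.map (emb d false) (cube d))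
              ⊔ SimpleGraph.fromEdgeSet ↑hvfin.toFinset
              = (SimpleGraph.map (emb d false) (cube d) ⊔ vert d)
                ⊔ SimpleGraph.map (emb d true) Ft := by
            rw [Set.Finite.coe_toFinset]
            show _ ⊔ vert d = _
            ext u v
            simp only [SimpleGraph.sup_adj]
            tauto
          have E3 : (SimpleGraph.map (emb d false) (cube d) ⊔ vert d)
              ⊔ SimpleGraph.map (emb d true) (cube d) = cube (d+1) := by
            rw [cube_succ_decomp]
            ext u v
            simp only [SimpleGraph.sup_adj]
            tauto
          rw [E2] at p2
          rw [E3] at p3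
          rw [sup_comm]
          exact (p1.trans p2).trans p3
        · rw [SimpleGraph.edgeSet_sup,
            Set.ncard_union_eq (disj_bt Fb Ft) (Set.toFinite _) (Set.toFinite _),
            ncard_edgeSet_map, ncard_edgeSet_map, cntb, cntt, Lfun_succ]

-- characters of the cube
noncomputable def chi {d : ℕ} (S : Finset (Fin d)) (v : Fin d → Bool) : ℝ :=
  ∏ i ∈ S, (if v i then (-1 : ℝ) else 1)

lemma chi_sq {d : ℕ} (S : Finset (Fin d)) (v : Fin d → Bool) : chi S v * chi S v = 1 := by
  rw [chi, ← Finset.prod_mul_distrib]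
  apply Finset.prod_eq_one
  intro i _
  by_cases h : v i <;> simp [h]

lemma chi_update_mem {d : ℕ} {S : Finset (Fin d)} {i : Fin d} (hi : i ∈ S) (v : Fin d → Bool) :
    chi S (Function.update v i (!v i)) = - chi S v := by
  rw [chi, chi, ← Finset.mul_prod_erase _ _ hi, ← Finset.mul_prod_erase _ _ hi]
  have h1 : ∀ j ∈ S.erase i, (if Function.update v i (!v i) j then (-1:ℝ) else 1)
      = (if v j then (-1:ℝ) else 1) := by
    intro j hj
    rw [Function.update_of_ne (Finset.ne_of_mem_erase hj)]
  rw [Finset.prod_congr rfl h1, Function.update_self]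
  by_cases h : v i <;> simp [h]

lemma chi_update_not_mem {d : ℕ} {S : Finset (Fin d)} {i : Fin d} (hi : i ∉ S)
    (v : Fin d → Bool) : chi S (Function.update v i (!v i)) = chi S v := by
  rw [chi, chi]
  apply Finset.prod_congr rfl
  intro j hj
  have hji : j ≠ i := fun hc => hi (by rwa [hc] at hj)
  rw [Function.update_of_ne hji]

lemma flip_involutive {d : ℕ} (i : Fin d) :
    Function.Involutive (fun v : Fin d → Bool => Function.update v i (!v i)) := by
  intro v
  funext j
  rcases eq_or_ne j i with rfl | hj
  · simp
  · simp [Function.update_of_ne hj]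

lemma sum_chi_mul_ne {d : ℕ} {S T : Finset (Fin d)} (hST : S ≠ T) :
    ∑ v : Fin d → Bool, chi S v * chi T v = 0 := by
  have hex : ∃ i, (i ∈ S ∧ i ∉ T) ∨ (i ∈ T ∧ i ∉ S) := by
    by_contra h
    push_neg at h
    apply hST
    ext i
    have := h i
    tauto
  obtain ⟨i, hi⟩ := hex
  have hflip : ∀ v : Fin d → Bool,
      chi S (Function.update v i (!v i)) * chi T (Function.update v i (!v i))
        = -(chi S v * chi T v) := by
    intro v
    rcases hi with ⟨h1, h2⟩ | ⟨h1, h2⟩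
    · rw [chi_update_mem h1, chi_update_not_mem h2]
      ring
    · rw [chi_update_mem h1, chi_update_not_mem h2]
      ring
  have hsum : ∑ v : Fin d → Bool, chi S v * chi T v
      = ∑ v : Fin d → Bool,
          chi S (Function.update v i (!v i)) * chi T (Function.update v i (!v i)) :=
    (Equiv.sum_comp (Function.Involutive.toPerm _ (flip_involutive i))
      (fun v => chi S v * chi T v)).symm
  have key : ∑ v : Fin d → Bool, chi S v * chi T v
      = - ∑ v : Fin d → Bool, chi S v * chi T v := by
    conv_lhs => rw [hsum]
    rw [Finset.sum_congr rfl (fun v _ => hflip v), Finset.sum_neg_distrib]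
  linarith [key]

lemma sum_chi_sq {d : ℕ} (S : Finset (Fin d)) :
    ∑ v : Fin d → Bool, chi S v * chi S v = (2:ℝ)^d := by
  have h1 : ∀ v : Fin d → Bool, chi S v * chi S v = 1 := chi_sq S
  rw [Finset.sum_congr rfl (fun v _ => h1 v), Finset.sum_const, Finset.card_univ]
  simp [mul_comm]

lemma chi_indep {d : ℕ} (c : Finset (Fin d) → ℝ)
    (h : ∀ v : Fin d → Bool, ∑ S : Finset (Fin d), c S * chi S v = 0) :
    ∀ T, c T = 0 := by
  intro T
  have h1 : ∑ v : Fin d → Bool, (∑ S : Finset (Fin d), c S * chi S v) * chi T v = 0 := by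
    rw [Finset.sum_congr rfl (fun v _ => by rw [h v, zero_mul]), Finset.sum_const_zero]
  have h2 : ∑ v : Fin d → Bool, (∑ S : Finset (Fin d), c S * chi S v) * chi T v
      = ∑ S : Finset (Fin d), c S * ∑ v : Fin d → Bool, chi S v * chi T v := by
    have e1 : ∀ v : Fin d → Bool, (∑ S : Finset (Fin d), c S * chi S v) * chi T v
        = ∑ S : Finset (Fin d), c S * (chi S v * chi T v) := by
      intro v
      rw [Finset.sum_mul]
      apply Finset.sum_congr rfl
      intro S _
      ring
    rw [Finset.sum_congr rfl (fun v _ => e1 v), Finset.sum_comm]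
    apply Finset.sum_congr rfl
    intro S _
    rw [Finset.mul_sum]
  rw [h2] at h1
  have h3 : ∑ S : Finset (Fin d), c S * ∑ v : Fin d → Bool, chi S v * chi T v
      = c T * (2:ℝ)^d := by
    rw [Finset.sum_eq_single T]
    · rw [sum_chi_sq]
    · intro S _ hS
      rw [sum_chi_mul_ne hS, mul_zero]
    · intro hT
      exact absurd (Finset.mem_univ T) hT
  rw [h3] at h1
  have : (2:ℝ)^d ≠ 0 := by positivity
  exact (mul_eq_zero.1 h1).resolve_right this

-- dot product as a linear map
noncomputable def dotL {d : ℕ} (x : Fin d → ℝ) : (Fin d → ℝ) →ₗ[ℝ] ℝ where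
  toFun y := ∑ i, x i * y i
  map_add' y z := by
    simp only [Pi.add_apply, mul_add]
    rw [Finset.sum_add_distrib]
  map_smul' c y := by
    simp only [Pi.smul_apply, smul_eq_mul, RingHom.id_apply, Finset.mul_sum]
    apply Finset.sum_congr rfl
    intro i _
    ring

lemma exists_y (d r : ℕ) (hrd : r ≤ d) (X : Submodule ℝ (Fin d → ℝ))
    (hdim : Module.finrank ℝ ↥X = d - r) (S : Finset (Fin d)) :
    ∃ y : Fin (r - S.card) → (Fin d → ℝ),
      LinearIndependent ℝ y ∧ (∀ k, ∀ i ∈ S, y k i = 0) ∧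
      (∀ k, ∀ x ∈ X, ∑ i, x i * y k i = 0) := by
  classical
  have hfd : FiniteDimensional ℝ ↥X := inferInstance
  let b : Module.Basis (Fin (d - r)) ℝ ↥X := Module.finBasisOfFinrankEq ℝ ↥X hdim
  let L : (Fin d → ℝ) →ₗ[ℝ] ((Fin (d - r) → ℝ) × (↥S → ℝ)) :=
    LinearMap.prod (LinearMap.pi (fun k => dotL ((b k : Fin d → ℝ))))
      (LinearMap.pi (fun i : ↥S => LinearMap.proj (i : Fin d)))
  have hker : r - S.card ≤ Module.finrank ℝ ↥(LinearMap.ker L) := by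
    have h1 := LinearMap.finrank_range_add_finrank_ker L
    have h2 : Module.finrank ℝ (Fin d → ℝ) = d := by
      rw [Module.finrank_pi]
      simp
    have h3 : Module.finrank ℝ ↥(LinearMap.range L) ≤ (d - r) + S.card := by
      have h4 := Submodule.finrank_le (LinearMap.range L)
      have h5 : Module.finrank ℝ ((Fin (d - r) → ℝ) × (↥S → ℝ)) = (d - r) + S.card := by
        rw [Module.finrank_prod, Module.finrank_pi, Module.finrank_pi]
        simp [Fintype.card_coe]
      omega
    omega
  obtain ⟨f, hf⟩ := exists_linearIndependent_of_le_finrank hker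
  refine ⟨fun k => ((f k : Fin d → ℝ)), ?_, ?_, ?_⟩
  · exact hf.map' (LinearMap.ker L).subtype (Submodule.ker_subtype _)
  · intro k i hi
    have hk := (f k).2
    rw [LinearMap.mem_ker] at hk
    have := congrFun (congrArg Prod.snd hk) ⟨i, hi⟩
    exact this
  · intro k x hx
    have hk := (f k).2
    rw [LinearMap.mem_ker] at hk
    have hdot : ∀ k' : Fin (d - r), ∑ i, (b k' : Fin d → ℝ) i * (f k : Fin d → ℝ) i = 0 := by
      intro k'
      have := congrFun (congrArg Prod.fst hk) k'
      exact this
    have hxrepr : x = ∑ k', (b.repr ⟨x, hx⟩) k' • ((b k' : Fin d → ℝ)) := by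
      have h0 : (⟨x, hx⟩ : ↥X) = ∑ k', (b.repr ⟨x, hx⟩) k' • b k' := (b.sum_repr ⟨x, hx⟩).symm
      have h1 := congrArg (Submodule.subtype X) h0
      rw [map_sum] at h1
      simpa using h1
    rw [hxrepr]
    have e1 : ∀ i, (∑ k', (b.repr ⟨x, hx⟩) k' • ((b k' : Fin d → ℝ))) i
        = ∑ k', (b.repr ⟨x, hx⟩) k' * (b k' : Fin d → ℝ) i := by
      intro i
      rw [Finset.sum_apply]
      apply Finset.sum_congr rfl
      intro k' _
      rfl
    have hswap : ∑ i, (∑ k', (b.repr ⟨x, hx⟩) k' • ((b k' : Fin d → ℝ))) i * (f k : Fin d → ℝ) i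
        = ∑ k', (b.repr ⟨x, hx⟩) k' * ∑ i, (b k' : Fin d → ℝ) i * (f k : Fin d → ℝ) i := by
      rw [Finset.sum_congr rfl (fun i _ => by rw [e1 i, Finset.sum_mul]), Finset.sum_comm]
      apply Finset.sum_congr rfl
      intro k' _
      rw [Finset.mul_sum]
      apply Finset.sum_congr rfl
      intro i _
      ring
    rw [hswap]
    apply Finset.sum_eq_zero
    intro k' _
    rw [hdot k', mul_zero]

lemma flip_flip {d : ℕ} (u : Fin d → Bool) (i : Fin d) :
    Function.update (Function.update u i (!u i)) i (!(Function.update u i (!u i) i)) = u := by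
  rw [Function.update_self, Bool.not_not, Function.update_idem, Function.update_eq_self]

/-- The value of the `(S,y)` test function on an edge of the cube. -/
noncomputable def edgeVal {d : ℕ} (S : Finset (Fin d)) (y : Fin d → ℝ)
    (hy : ∀ i ∈ S, y i = 0) : Sym2 (Fin d → Bool) → ℝ :=
  Sym2.lift ⟨fun u w => ∑ i, (if w = Function.update u i (!u i) then chi S u * y i else 0), by
    intro u w
    apply Finset.sum_congr rfl
    intro i _
    have hiff : w = Function.update u i (!u i) ↔ u = Function.update w i (!w i) := by
      constructor
      · rintro rfl
        exact (flip_flip u i).symm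
      · rintro rfl
        exact (flip_flip w i).symm
    by_cases hc : w = Function.update u i (!u i)
    · rw [if_pos hc, if_pos (hiff.1 hc)]
      by_cases hiS : i ∈ S
      · rw [hy i hiS, mul_zero, mul_zero]
      · rw [hc, chi_update_not_mem hiS]
    · rw [if_neg hc, if_neg (fun hcc => hc (hiff.2 hcc))]⟩

lemma edgeVal_cubeEdge {d : ℕ} (S : Finset (Fin d)) (y : Fin d → ℝ)
    (hy : ∀ i ∈ S, y i = 0) (v : Fin d → Bool) (i : Fin d) :
    edgeVal S y hy (cubeEdge v i) = chi S v * y i := by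
  show ∑ j, (if Function.update v i (!v i) = Function.update v j (!v j)
      then chi S v * y j else 0) = chi S v * y i
  rw [Finset.sum_eq_single i]
  · rw [if_pos rfl]
  · intro j _ hji
    rw [if_neg]
    intro hc
    have h1 := congrFun hc j
    rw [Function.update_of_ne hji, Function.update_self] at h1
    simp at h1
  · intro h
    exact absurd (Finset.mem_univ i) h

lemma card_index (d r : ℕ) :
    Fintype.card ((S : Finset (Fin d)) × Fin (r - S.card)) = Lfun d r := by
  classical
  rw [Fintype.card_sigma]
  simp only [Fintype.card_fin]
  rw [← Finset.powerset_univ, Finset.powerset_card_disjiUnion]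
  erw [Finset.sum_disjiUnion]
  have hin : ∀ j ∈ Finset.range ((Finset.univ : Finset (Fin d)).card + 1),
      ∑ S ∈ Finset.powersetCard j (Finset.univ : Finset (Fin d)), (r - S.card)
        = Nat.choose d j * (r - j) := by
    intro j _
    rw [Finset.sum_congr rfl (fun S hS => by rw [(Finset.mem_powersetCard.1 hS).2]),
      Finset.sum_const, Finset.card_powersetCard, smul_eq_mul, Finset.card_univ,
      Fintype.card_fin]
  rw [Finset.sum_congr rfl hin, Finset.card_univ, Fintype.card_fin]
  rfl

end Aux

/-- (Key lemma for the hypercube.) Given a subspace `X ⊆ ℝ^d` of dimension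
`d - r` all of whose nonzero vectors have support of size `≥ r + 1`, there are a spanning
subgraph `F` of `Q_d` and vectors `f_e ∈ ℝ^w` satisfying (Q1), (Q2), (Q3). -/
theorem stmt10 (d r : ℕ) (hrd : r ≤ d) (w : ℕ)
    (hw : w = r * 2 ^ (r - 1) +
      ∑ j ∈ Finset.Icc 1 (r - 1), Nat.choose (d - j - 1) (r - j) * j * 2 ^ (j - 1))
    (X : Submodule ℝ (Fin d → ℝ))
    (hdim : Module.finrank ℝ ↥X = d - r)
    (hsupp : ∀ x ∈ X, x ≠ 0 → r + 1 ≤ {i : Fin d | x i ≠ 0}.ncard) :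
    ∃ (F : SimpleGraph (Fin d → Bool)) (f : Sym2 (Fin d → Bool) → (Fin w → ℝ)),
      (WeaklySaturated (cube d) (starGraph (r + 1)) F ∧ F.edgeSet.ncard = w) ∧
      (∀ (v : Fin d → Bool), ∀ x ∈ X, ∑ i : Fin d, x i • f (cubeEdge v i) = 0) ∧
      Submodule.span ℝ (f '' (cube d).edgeSet) = ⊤ := by
  classical
  obtain ⟨F, hFle, hchain, hcnt⟩ := Aux.key d r hrd
  choose y hyind hyS hyX using fun S : Finset (Fin d) => Aux.exists_y d r hrd X hdim S
  have hcard : Fintype.card ((S : Finset (Fin d)) × Fin (r - S.card)) = w := by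
    rw [Aux.card_index d r, Aux.Lfun_eq d r hrd, hw]
  set e := Fintype.equivFinOfCardEq hcard with he
  set g : ((S : Finset (Fin d)) × Fin (r - S.card)) → Sym2 (Fin d → Bool) → ℝ :=
    fun a => Aux.edgeVal a.1 (y a.1 a.2) (fun i hi => hyS a.1 a.2 i hi) with hg
  have hgval : ∀ (a : (S : Finset (Fin d)) × Fin (r - S.card)) (v : Fin d → Bool) (i : Fin d),
      g a (cubeEdge v i) = Aux.chi a.1 v * y a.1 a.2 i :=
    fun a v i => Aux.edgeVal_cubeEdge _ _ _ v i
  refine ⟨F, fun ed m => g (e.symm m) ed,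
    ⟨Aux.weaklySaturated_of_chain hFle hchain, ?_⟩, ?_, ?_⟩
  · rw [hcnt, Aux.Lfun_eq d r hrd, hw]
  · -- (Q2)
    intro v x hx
    funext m
    simp only [Finset.sum_apply, Pi.smul_apply, smul_eq_mul, Pi.zero_apply]
    rw [Finset.sum_congr rfl (fun i _ => by rw [hgval (e.symm m) v i])]
    have hfac : ∑ i, x i * (Aux.chi (e.symm m).1 v * y (e.symm m).1 (e.symm m).2 i)
        = Aux.chi (e.symm m).1 v * ∑ i, x i * y (e.symm m).1 (e.symm m).2 i := by
      rw [Finset.mul_sum]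
      apply Finset.sum_congr rfl
      intro i _
      ring
    rw [hfac, hyX _ _ x hx, mul_zero]
  · -- (Q3)
    by_contra hne
    have hlt : Submodule.span ℝ ((fun ed m => g (e.symm m) ed) '' (cube d).edgeSet) < ⊤ :=
      lt_top_iff_ne_top.2 hne
    obtain ⟨φ, hφne, hφmap⟩ := Submodule.exists_dual_map_eq_bot_of_lt_top hlt inferInstance
    set c : Fin w → ℝ := fun m => φ (fun j => if m = j then (1:ℝ) else 0) with hc
    have hφx : ∀ xv : Fin w → ℝ, φ xv = ∑ m, xv m * c m := by
      intro xv
      conv_lhs => rw [pi_eq_sum_univ xv]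
      rw [map_sum]
      apply Finset.sum_congr rfl
      intro m _
      rw [map_smul, smul_eq_mul]
    have hzero : ∀ (v : Fin d → Bool) (i : Fin d),
        ∑ m, g (e.symm m) (cubeEdge v i) * c m = 0 := by
      intro v i
      have hmem : cubeEdge v i ∈ (cube d).edgeSet := by
        rw [cubeEdge, SimpleGraph.mem_edgeSet]
        exact Aux.cube_adj.2 ⟨i, rfl⟩
      have hspan : (fun ed m => g (e.symm m) ed) (cubeEdge v i)
          ∈ Submodule.span ℝ ((fun ed m => g (e.symm m) ed) '' (cube d).edgeSet) :=
        Submodule.subset_span (Set.mem_image_of_mem _ hmem)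
      have hphi0 : φ ((fun ed m => g (e.symm m) ed) (cubeEdge v i)) = 0 := by
        have hm := Submodule.mem_map_of_mem (f := φ) hspan
        rw [hφmap] at hm
        simpa using hm
      rw [hφx] at hphi0
      exact hphi0
    have hzero' : ∀ (v : Fin d → Bool) (i : Fin d),
        ∑ a : (S : Finset (Fin d)) × Fin (r - S.card), g a (cubeEdge v i) * c (e a) = 0 := by
      intro v i
      rw [← Equiv.sum_comp e.symm (fun a => g a (cubeEdge v i) * c (e a))]
      rw [← hzero v i]
      apply Finset.sum_congr rfl
      intro m _
      rw [Equiv.apply_symm_apply]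
    have hSzero : ∀ (S : Finset (Fin d)) (i : Fin d),
        ∑ k, c (e ⟨S, k⟩) * y S k i = 0 := by
      intro S i
      have hv : ∀ v : Fin d → Bool,
          ∑ S' : Finset (Fin d), (∑ k, c (e ⟨S', k⟩) * y S' k i) * Aux.chi S' v = 0 := by
        intro v
        have hsig : ∑ a : (S' : Finset (Fin d)) × Fin (r - S'.card), g a (cubeEdge v i) * c (e a)
            = ∑ S' : Finset (Fin d), ∑ k, g ⟨S', k⟩ (cubeEdge v i) * c (e ⟨S', k⟩) := by
          rw [← Finset.univ_sigma_univ, Finset.sum_sigma]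
        have e2 : ∀ S' : Finset (Fin d),
            (∑ k, c (e ⟨S', k⟩) * y S' k i) * Aux.chi S' v
            = ∑ k, g ⟨S', k⟩ (cubeEdge v i) * c (e ⟨S', k⟩) := by
          intro S'
          rw [Finset.sum_mul]
          apply Finset.sum_congr rfl
          intro k _
          rw [hgval ⟨S', k⟩ v i]
          ring
        rw [Finset.sum_congr rfl (fun S' _ => e2 S'), ← hsig]
        exact hzero' v i
      exact Aux.chi_indep _ hv S
    have hczero : ∀ a : (S : Finset (Fin d)) × Fin (r - S.card), c (e a) = 0 := by
      rintro ⟨S, k⟩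
      have h2 : ∑ k', c (e ⟨S, k'⟩) • y S k' = 0 := by
        funext i
        simp only [Finset.sum_apply, Pi.smul_apply, smul_eq_mul, Pi.zero_apply]
        exact hSzero S i
      exact Fintype.linearIndependent_iff.1 (hyind S) _ h2 k
    have hcall : ∀ m, c m = 0 := by
      intro m
      have := hczero (e.symm m)
      rwa [Equiv.apply_symm_apply] at this
    apply hφne
    apply LinearMap.ext
    intro xv
    rw [hφx]
    simp [hcall]
end

section
/- For all integers d ≥ r ≥ 1, m(Q_d, r) ≤ m(Q_{d-r}, r) + (r−1)·m(Q_{d-r}, r−1) + Σ_{j=1}^{⌈r/2⌉−1} C(r, 2j+1)·m(Q_{d-r}, r−2j). -/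
open Finset

section Infect

variable {V : Type*} [Fintype V] (G : SimpleGraph V) (r : ℕ) (A : Set V)
set_option linter.unusedSectionVars false
set_option linter.unusedVariables false

lemma subset_bootstrapStep : A ⊆ bootstrapStep G r A := Set.subset_union_left

lemma bootstrapStep_mono {A B : Set V} (h : A ⊆ B) :
    bootstrapStep G r A ⊆ bootstrapStep G r B := by
  apply Set.union_subset_union h
  intro v hv
  exact le_trans hv (Set.ncard_le_ncard (Set.inter_subset_inter_right _ h) (Set.toFinite _))

lemma bootstrapStep_anti {r t : ℕ} (h : t ≤ r) (A : Set V) :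
    bootstrapStep G r A ⊆ bootstrapStep G t A := by
  apply Set.union_subset_union subset_rfl
  intro v hv; exact le_trans h hv

lemma iterate_subset_succ (k : ℕ) :
    (bootstrapStep G r)^[k] A ⊆ (bootstrapStep G r)^[k+1] A := by
  rw [Function.iterate_succ_apply']
  exact subset_bootstrapStep G r _

lemma iterate_mono_iter {k l : ℕ} (h : k ≤ l) :
    (bootstrapStep G r)^[k] A ⊆ (bootstrapStep G r)^[l] A := by
  induction l with
  | zero => simp_all
  | succ l ih =>
    rcases Nat.lt_or_ge k (l+1) with h' | h'
    · exact subset_trans (ih (Nat.lt_succ_iff.mp h')) (iterate_subset_succ G r A l)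
    · have : k = l + 1 := le_antisymm h h'
      subst this; rfl

/-- The final infected set. -/
def infect : Set V := ⋃ k, (bootstrapStep G r)^[k] A

lemma subset_infect : A ⊆ infect G r A := Set.subset_iUnion_of_subset 0 subset_rfl

lemma iterate_subset_infect (k : ℕ) : (bootstrapStep G r)^[k] A ⊆ infect G r A :=
  Set.subset_iUnion_of_subset k subset_rfl

lemma exists_fixed_iterate : ∃ K, (bootstrapStep G r)^[K+1] A = (bootstrapStep G r)^[K] A := by
  by_contra hcon
  push_neg at hcon
  have hstrict : ∀ K : ℕ, K ≤ ((bootstrapStep G r)^[K] A).ncard := by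
    intro K
    induction K with
    | zero => exact Nat.zero_le _
    | succ K ih =>
      have hss : (bootstrapStep G r)^[K] A ⊂ (bootstrapStep G r)^[K+1] A :=
        (iterate_subset_succ G r A K).ssubset_of_ne (Ne.symm (hcon K))
      exact lt_of_le_of_lt ih (Set.ncard_lt_ncard hss (Set.toFinite _))
  have h1 := hstrict (Fintype.card V + 1)
  have h2 : ((bootstrapStep G r)^[Fintype.card V + 1] A).ncard ≤ Fintype.card V := by
    have := Set.ncard_le_ncard (Set.subset_univ ((bootstrapStep G r)^[Fintype.card V + 1] A))
      Set.finite_univ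
    simpa [Set.ncard_univ] using this
  omega

lemma infect_eq_iterate : ∃ K, infect G r A = (bootstrapStep G r)^[K] A ∧
    bootstrapStep G r ((bootstrapStep G r)^[K] A) = (bootstrapStep G r)^[K] A := by
  obtain ⟨K, hK⟩ := exists_fixed_iterate G r A
  have hstab : ∀ l, K ≤ l → (bootstrapStep G r)^[l] A = (bootstrapStep G r)^[K] A := by
    intro l hl
    induction l with
    | zero => simp_all
    | succ l ih =>
      rcases Nat.lt_or_ge K (l+1) with h' | h'
      · have hKl := ih (Nat.lt_succ_iff.mp h')
        rw [Function.iterate_succ_apply', hKl]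
        exact (Function.iterate_succ_apply' (bootstrapStep G r) K A).symm.trans hK
      · rw [le_antisymm hl h']
  refine ⟨K, ?_, (Function.iterate_succ_apply' (bootstrapStep G r) K A).symm.trans hK⟩
  apply subset_antisymm
  · apply Set.iUnion_subset
    intro k
    rcases Nat.le_total k K with h | h
    · exact iterate_mono_iter G r A h
    · rw [hstab k h]
  · exact iterate_subset_infect G r A K

lemma bootstrapStep_infect : bootstrapStep G r (infect G r A) = infect G r A := by
  obtain ⟨K, h1, h2⟩ := infect_eq_iterate G r A
  rw [h1, h2]

lemma infect_closed {v : V} (h : r ≤ (G.neighborSet v ∩ infect G r A).ncard) :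
    v ∈ infect G r A := by
  rw [← bootstrapStep_infect G r A]
  exact Or.inr h

lemma percolates_iff_infect : Percolates G r A ↔ infect G r A = Set.univ := by
  constructor
  · rintro ⟨N, hN⟩
    apply subset_antisymm (Set.subset_univ _)
    rw [← hN]; exact iterate_subset_infect G r A N
  · intro h
    obtain ⟨K, h1, _⟩ := infect_eq_iterate G r A
    exact ⟨K, h1 ▸ h⟩

lemma infect_of_nbrs {E : Finset V} (hE : ∀ w ∈ E, G.Adj v w ∧ w ∈ infect G r A)
    (hcard : r ≤ E.card) : v ∈ infect G r A := by
  apply infect_closed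
  have hsub : (E : Set V) ⊆ G.neighborSet v ∩ infect G r A := by
    intro w hw
    exact ⟨(hE w hw).1, (hE w hw).2⟩
  calc r ≤ E.card := hcard
    _ = (E : Set V).ncard := (Set.ncard_coe_finset E).symm
    _ ≤ _ := Set.ncard_le_ncard hsub (Set.toFinite _)

lemma percolates_anti {r t : ℕ} (h : t ≤ r) (hA : Percolates G r A) : Percolates G t A := by
  obtain ⟨N, hN⟩ := hA
  refine ⟨N, subset_antisymm (Set.subset_univ _) ?_⟩
  rw [← hN]
  clear hN
  induction N with
  | zero => rfl
  | succ N ih =>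
    rw [Function.iterate_succ_apply', Function.iterate_succ_apply']
    exact subset_trans (bootstrapStep_mono G r ih) (bootstrapStep_anti G h _)

lemma percolates_univ : Percolates G r (Set.univ) := ⟨0, rfl⟩

lemma minPerc_le (h : Percolates G r A) : minPerc G r ≤ A.ncard :=
  Nat.sInf_le ⟨A, h, rfl⟩

lemma exists_minPerc_set : ∃ A : Set V, Percolates G r A ∧ A.ncard = minPerc G r := by
  have h : Set.Nonempty {n | ∃ A : Set V, Percolates G r A ∧ A.ncard = n} :=
    ⟨Set.univ.ncard, Set.univ, percolates_univ G r, rfl⟩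
  exact Nat.sInf_mem h

lemma minPerc_mono {r t : ℕ} (h : t ≤ r) : minPerc G t ≤ minPerc G r := by
  obtain ⟨A, hA, hcard⟩ := exists_minPerc_set G r
  exact hcard ▸ minPerc_le G t A (percolates_anti G A h hA)

end Infect

section Emb

lemma emb_infect {V W : Type*} [Fintype V] [Fintype W]
    (G : SimpleGraph V) (G' : SimpleGraph W) (r t : ℕ) (A : Set W)
    (B : Set V) (φ : V → W) (hφ : Function.Injective φ)
    (hadj : ∀ x y, G.Adj x y → G'.Adj (φ x) (φ y))
    (hB : ∀ x ∈ B, φ x ∈ infect G' r A)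
    (hout : ∀ x : V, ∃ E : Finset W, (r - t) ≤ E.card ∧
      (∀ w ∈ E, G'.Adj (φ x) w ∧ w ∈ infect G' r A) ∧ ∀ y : V, φ y ∉ E)
    (hperc : Percolates G t B) :
    ∀ x : V, φ x ∈ infect G' r A := by
  classical
  obtain ⟨N, hN⟩ := hperc
  have key : ∀ k, ∀ x ∈ (bootstrapStep G t)^[k] B, φ x ∈ infect G' r A := by
    intro k
    induction k with
    | zero => exact hB
    | succ k ih =>
      intro x hx
      rw [Function.iterate_succ_apply'] at hx
      rcases hx with hx | hx
      · exact ih x hx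
      · obtain ⟨E, hEcard, hEprop, hEout⟩ := hout x
        have hfin : (G.neighborSet x ∩ (bootstrapStep G t)^[k] B).Finite := Set.toFinite _
        have hcard : t ≤ hfin.toFinset.card := by
          rwa [← Set.ncard_eq_toFinset_card _ hfin]
        apply infect_of_nbrs G' r A (E := hfin.toFinset.image φ ∪ E)
        · intro w hw
          rcases Finset.mem_union.mp hw with hw | hw
          · obtain ⟨y, hy, rfl⟩ := Finset.mem_image.mp hw
            rw [Set.Finite.mem_toFinset] at hy
            exact ⟨hadj x y hy.1, ih y hy.2⟩
          · exact hEprop w hw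
        · have hdisj : Disjoint (hfin.toFinset.image φ) E := by
            rw [Finset.disjoint_left]
            rintro w hw hwE
            obtain ⟨y, _, rfl⟩ := Finset.mem_image.mp hw
            exact hEout y hwE
          rw [Finset.card_union_of_disjoint hdisj, Finset.card_image_of_injective _ hφ]
          omega
  intro x
  exact key N x (by rw [hN]; trivial)

end Emb

section Cube

/-- Put `x` on the first `n` coordinates and `S` on the last `r`. -/
def app {n r : ℕ} (x : Fin n → Bool) (S : Fin r → Bool) : Fin (n + r) → Bool := Fin.append x S

lemma app_inj {n r : ℕ} {x y : Fin n → Bool} {S T : Fin r → Bool}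
    (h : app x S = app y T) : x = y ∧ S = T := by
  constructor
  · funext i
    have := congrFun h (Fin.castAdd r i)
    simpa [app, Fin.append_left] using this
  · funext i
    have := congrFun h (Fin.natAdd n i)
    simpa [app, Fin.append_right] using this

lemma app_left_injective {n r : ℕ} (S : Fin r → Bool) :
    Function.Injective (fun x : Fin n → Bool => app x S) :=
  fun _ _ h => (app_inj h).1

lemma app_right_injective {n r : ℕ} (x : Fin n → Bool) :
    Function.Injective (fun S : Fin r → Bool => app x S) :=
  fun _ _ h => (app_inj h).2

lemma app_surj {n r : ℕ} (v : Fin (n + r) → Bool) :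
    ∃ (x : Fin n → Bool) (S : Fin r → Bool), v = app x S := by
  refine ⟨fun i => v (Fin.castAdd r i), fun i => v (Fin.natAdd n i), ?_⟩
  funext j
  refine Fin.addCases (fun i => ?_) (fun i => ?_) j
  · simp [app, Fin.append_left]
  · simp [app, Fin.append_right]

lemma cube_adj_app_left {n r : ℕ} {x y : Fin n → Bool} (S : Fin r → Bool)
    (h : (cube n).Adj x y) : (cube (n + r)).Adj (app x S) (app y S) := by
  change ∃ i, x i ≠ y i ∧ ∀ j, j ≠ i → x j = y j at h
  show ∃ i, app x S i ≠ app y S i ∧ ∀ j, j ≠ i → app x S j = app y S j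
  obtain ⟨i, hne, hoth⟩ := h
  refine ⟨Fin.castAdd r i, by simpa [app, Fin.append_left] using hne, ?_⟩
  intro j hj
  refine Fin.addCases (fun i' => ?_) (fun i' => ?_) j (motive := fun j =>
    j ≠ Fin.castAdd r i → app x S j = app y S j) hj
  · intro hne'
    have : i' ≠ i := fun h' => hne' (by rw [h'])
    simpa [app, Fin.append_left] using hoth i' this
  · intro _
    simp [app, Fin.append_right]

lemma cube_adj_app_right {n r : ℕ} (x : Fin n → Bool) {S T : Fin r → Bool}
    (h : (cube r).Adj S T) : (cube (n + r)).Adj (app x S) (app x T) := by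
  change ∃ i, S i ≠ T i ∧ ∀ j, j ≠ i → S j = T j at h
  show ∃ i, app x S i ≠ app x T i ∧ ∀ j, j ≠ i → app x S j = app x T j
  obtain ⟨i, hne, hoth⟩ := h
  refine ⟨Fin.natAdd n i, by simpa [app, Fin.append_right] using hne, ?_⟩
  intro j hj
  refine Fin.addCases (fun i' => ?_) (fun i' => ?_) j (motive := fun j =>
    j ≠ Fin.natAdd n i → app x S j = app x T j) hj
  · intro _
    simp [app, Fin.append_left]
  · intro hne'
    have : i' ≠ i := fun h' => hne' (by rw [h'])
    simpa [app, Fin.append_right] using hoth i' this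

lemma layer_full {n r : ℕ} (A : Set (Fin (n + r) → Bool)) (S : Fin r → Bool)
    (F : Finset (Fin r → Bool)) (hF : ∀ T ∈ F, (cube r).Adj S T)
    (hFfull : ∀ T ∈ F, ∀ x, app x T ∈ infect (cube (n + r)) r A)
    (t : ℕ) (hcard : r - t ≤ F.card)
    (B : Set (Fin n → Bool))
    (hB : ∀ x ∈ B, app x S ∈ infect (cube (n + r)) r A)
    (hperc : Percolates (cube n) t B) :
    ∀ x, app x S ∈ infect (cube (n + r)) r A := by
  classical
  apply emb_infect (cube n) (cube (n + r)) r t A B (fun x => app x S)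
    (app_left_injective S) (fun x y h => cube_adj_app_left S h) hB ?_ hperc
  intro x
  refine ⟨F.image (fun T => app x T), ?_, ?_, ?_⟩
  · rw [Finset.card_image_of_injective _ (app_right_injective x)]
    exact hcard
  · intro w hw
    obtain ⟨T, hT, rfl⟩ := Finset.mem_image.mp hw
    exact ⟨cube_adj_app_right x (hF T hT), hFfull T hT x⟩
  · intro y hy
    obtain ⟨T, hT, heq⟩ := Finset.mem_image.mp hy
    have h1 := app_inj heq
    exact (cube r).loopless.irrefl S (h1.2 ▸ hF T hT)

end Cube

section Main

/-- Number of `true`s among the last `s` layer-coordinates. -/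
def tailCount {s : ℕ} (S : Fin (s + 1) → Bool) : ℕ :=
  (Finset.univ.filter (fun j : Fin s => S j.succ = true)).card

/-- The seeded layers. -/
def phase0 {s : ℕ} (S : Fin (s + 1) → Bool) : Prop :=
  S 0 = decide (tailCount S % 2 = 1)

instance {s : ℕ} : DecidablePred (phase0 (s := s)) :=
  fun S => decidable_of_iff (S 0 = decide (tailCount S % 2 = 1)) Iff.rfl

/-- Order of infection of the layers. -/
def keyFn {s : ℕ} (S : Fin (s + 1) → Bool) : ℕ :=
  2 * tailCount S + (if phase0 S then 0 else 1)

/-- The percolating set. -/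
noncomputable def bigSeed (n s : ℕ) (Bf : ℕ → Finset (Fin n → Bool)) :
    Finset (Fin (n + (s + 1)) → Bool) :=
  (Finset.univ.filter phase0).biUnion
    (fun S => (Bf (s + 1 - tailCount S)).image (fun x => app x S))

lemma mem_bigSeed {n s : ℕ} (Bf : ℕ → Finset (Fin n → Bool)) {S : Fin (s + 1) → Bool}
    (hS : phase0 S) {x : Fin n → Bool} (hx : x ∈ Bf (s + 1 - tailCount S)) :
    app x S ∈ bigSeed n s Bf := by
  apply Finset.mem_biUnion.mpr
  exact ⟨S, Finset.mem_filter.mpr ⟨Finset.mem_univ _, hS⟩, Finset.mem_image_of_mem _ hx⟩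

lemma tailCount_le {s : ℕ} (S : Fin (s + 1) → Bool) : tailCount S ≤ s := by
  unfold tailCount
  exact le_trans (Finset.card_filter_le _ _) (by simp)

lemma tailCount_update_zero {s : ℕ} (S : Fin (s + 1) → Bool) (b : Bool) :
    tailCount (Function.update S 0 b) = tailCount S := by
  unfold tailCount
  have heq : (Finset.univ.filter (fun k : Fin s => Function.update S 0 b k.succ = true))
      = Finset.univ.filter (fun k : Fin s => S k.succ = true) := by
    ext k
    simp [Function.update_of_ne (Fin.succ_ne_zero k)]
  rw [heq]

lemma tailCount_update_succ_false {s : ℕ} (S : Fin (s + 1) → Bool) (j : Fin s)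
    (hj : S j.succ = true) :
    tailCount (Function.update S j.succ false) = tailCount S - 1 := by
  unfold tailCount
  have heq : (Finset.univ.filter (fun k : Fin s => Function.update S j.succ false k.succ = true))
      = (Finset.univ.filter (fun k : Fin s => S k.succ = true)).erase j := by
    ext k
    simp only [Finset.mem_erase, Finset.mem_filter, Finset.mem_univ, true_and]
    by_cases hk : k = j
    · subst hk; simp
    · rw [Function.update_of_ne (fun h => hk (Fin.succ_injective _ h))]
      tauto
  rw [heq, Finset.card_erase_of_mem (by simp [hj])]

lemma tailCount_update_succ_true {s : ℕ} (S : Fin (s + 1) → Bool) (j : Fin s)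
    (hj : S j.succ = false) :
    tailCount (Function.update S j.succ true) = tailCount S + 1 := by
  classical
  unfold tailCount
  have heq : (Finset.univ.filter (fun k : Fin s => Function.update S j.succ true k.succ = true))
      = insert j (Finset.univ.filter (fun k : Fin s => S k.succ = true)) := by
    ext k
    simp only [Finset.mem_insert, Finset.mem_filter, Finset.mem_univ, true_and]
    by_cases hk : k = j
    · subst hk; simp
    · rw [Function.update_of_ne (fun h => hk (Fin.succ_injective _ h))]
      tauto
  rw [heq, Finset.card_insert_of_notMem (by simp [hj])]

lemma decide_parity_succ (m : ℕ) : decide ((m + 1) % 2 = 1) = !decide (m % 2 = 1) := by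
  rcases Nat.mod_two_eq_zero_or_one m with h | h
  · have h2 : (m + 1) % 2 = 1 := by omega
    simp [h, h2]
  · have h2 : (m + 1) % 2 = 0 := by omega
    simp [h, h2]

lemma bool_eq_not_of_ne {a b : Bool} (h : a ≠ b) : a = !b := by
  cases a <;> cases b <;> simp_all

lemma cube_adj_update {d : ℕ} (S : Fin d → Bool) (i : Fin d) (b : Bool) (h : S i ≠ b) :
    (cube d).Adj S (Function.update S i b) :=
  show ∃ k, S k ≠ Function.update S i b k ∧ ∀ j, j ≠ k → S j = Function.update S i b j from
  ⟨i, by simpa using h, fun j hj => by rw [Function.update_of_ne hj]⟩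

end Main

section MainPerc

lemma phase0_update_succ_false {s : ℕ} {S : Fin (s + 1) → Bool} {j : Fin s}
    (hj : S j.succ = true) :
    phase0 (Function.update S j.succ false) ↔ ¬ phase0 S := by
  have hm1 : 1 ≤ tailCount S := by
    unfold tailCount
    exact Finset.card_pos.mpr ⟨j, Finset.mem_filter.mpr ⟨Finset.mem_univ _, hj⟩⟩
  unfold phase0
  rw [tailCount_update_succ_false S j hj, Function.update_of_ne (Fin.succ_ne_zero j).symm]
  obtain ⟨m, hm'⟩ : ∃ m, tailCount S = m + 1 := ⟨tailCount S - 1, by omega⟩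
  rw [hm', Nat.add_sub_cancel, decide_parity_succ]
  cases hS0 : S 0 <;> cases hdm : decide (m % 2 = 1) <;> simp

lemma phase0_update_succ_true {s : ℕ} {S : Fin (s + 1) → Bool} {j : Fin s}
    (hj : S j.succ = false) :
    phase0 (Function.update S j.succ true) ↔ ¬ phase0 S := by
  unfold phase0
  rw [tailCount_update_succ_true S j hj, Function.update_of_ne (Fin.succ_ne_zero j).symm,
    decide_parity_succ]
  cases hS0 : S 0 <;> cases hdm : decide (tailCount S % 2 = 1) <;> simp

lemma phase0_head_flip {s : ℕ} (S : Fin (s + 1) → Bool) :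
    phase0 (Function.update S 0 (!S 0)) ↔ ¬ phase0 S := by
  unfold phase0
  rw [tailCount_update_zero, Function.update_self]
  cases hS0 : S 0 <;> cases hdm : decide (tailCount S % 2 = 1) <;> simp

theorem main_perc (n s : ℕ) (Bf : ℕ → Finset (Fin n → Bool))
    (hBf : ∀ t, t ≤ s + 1 → Percolates (cube n) t ↑(Bf t)) :
    Percolates (cube (n + (s + 1))) (s + 1) ↑(bigSeed n s Bf) := by
  classical
  set A : Set (Fin (n + (s + 1)) → Bool) := ↑(bigSeed n s Bf) with hA
  have hAsub : A ⊆ infect (cube (n + (s + 1))) (s + 1) A := subset_infect _ _ _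
  have main : ∀ k (S : Fin (s + 1) → Bool), keyFn S = k →
      ∀ x, app x S ∈ infect (cube (n + (s + 1))) (s + 1) A := by
    intro k
    induction k using Nat.strong_induction_on with
    | _ k IH =>
      intro S hk x
      have hms : tailCount S ≤ s := tailCount_le S
      set m := tailCount S with hm
      set Tset := Finset.univ.filter (fun j : Fin s => S j.succ = true) with hTs
      have hTcard : Tset.card = m := rfl
      set Fdown := Tset.image (fun j => Function.update S j.succ false) with hFd
      have hdnInj : Set.InjOn (fun j : Fin s => Function.update S j.succ false) ↑Tset := by
        intro a ha b hb heq
        by_contra hab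
        have hne : a.succ ≠ b.succ := fun h => hab (Fin.succ_injective _ h)
        have h1 := congrFun heq a.succ
        change Function.update S a.succ false a.succ = Function.update S b.succ false a.succ at h1
        rw [Function.update_self, Function.update_of_ne hne] at h1
        rw [Finset.mem_coe, Finset.mem_filter] at ha
        rw [ha.2] at h1
        exact Bool.false_ne_true h1
      have hFdownCard : Fdown.card = m := by
        rw [hFd, Finset.card_image_of_injOn hdnInj, hTcard]
      have hFdownAdj : ∀ T ∈ Fdown, (cube (s + 1)).Adj S T := by
        intro T hT'
        obtain ⟨j, hj, rfl⟩ := Finset.mem_image.mp hT'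
        have hjt : S j.succ = true := (Finset.mem_filter.mp hj).2
        exact cube_adj_update S j.succ false (by simp [hjt])
      by_cases hph : phase0 S
      · -- seeded layer
        have hkey : k = 2 * m := by
          rw [← hk]; unfold keyFn; rw [if_pos hph]; omega
        have hFfull : ∀ T ∈ Fdown, ∀ y, app y T ∈ infect (cube (n + (s + 1))) (s + 1) A := by
          intro T hT' y
          obtain ⟨j, hj, rfl⟩ := Finset.mem_image.mp hT'
          have hjt : S j.succ = true := (Finset.mem_filter.mp hj).2
          have hm1 : 1 ≤ m := by
            rw [← hTcard]; exact Finset.card_pos.mpr ⟨j, hj⟩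
          have hph' : ¬ phase0 (Function.update S j.succ false) := by
            rw [phase0_update_succ_false hjt]
            exact not_not_intro hph
          have htc : tailCount (Function.update S j.succ false) = m - 1 := by
            rw [tailCount_update_succ_false S j hjt, ← hm]
          have hkT : keyFn (Function.update S j.succ false) = 2 * (m - 1) + 1 := by
            unfold keyFn; rw [htc, if_neg hph']
          exact IH _ (by omega) _ rfl y
        apply layer_full A S Fdown hFdownAdj hFfull (s + 1 - m) ?_ ↑(Bf (s + 1 - m)) ?_
          (hBf _ (by omega)) x
        · rw [hFdownCard]; omega
        · intro y hy
          exact hAsub (mem_bigSeed Bf hph (by rwa [← hm]))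
      · -- unseeded layer
        have hkey : k = 2 * m + 1 := by
          rw [← hk]; unfold keyFn; rw [if_neg hph]
        set hd : Fin (s + 1) → Bool := Function.update S 0 (!S 0) with hhd
        have hdNot : hd ∉ Fdown := by
          intro hmem
          obtain ⟨j, hj, heq⟩ := Finset.mem_image.mp hmem
          have h1 := congrFun heq 0
          change Function.update S j.succ false 0 = hd 0 at h1
          rw [Function.update_of_ne (Fin.succ_ne_zero j).symm, hhd, Function.update_self] at h1
          exact (Bool.not_ne_self (S 0)) h1.symm
        set F := insert hd Fdown with hF
        have hFcard : F.card = m + 1 := by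
          rw [hF, Finset.card_insert_of_notMem hdNot, hFdownCard]
        have hFadj : ∀ T ∈ F, (cube (s + 1)).Adj S T := by
          intro T hT'
          rcases Finset.mem_insert.mp hT' with rfl | hT'
          · exact cube_adj_update S 0 (!S 0) (by cases S 0 <;> simp)
          · exact hFdownAdj T hT'
        have hFfull : ∀ T ∈ F, ∀ y, app y T ∈ infect (cube (n + (s + 1))) (s + 1) A := by
          intro T hT' y
          rcases Finset.mem_insert.mp hT' with rfl | hT'
          · have hph' : phase0 hd := by
              rw [hhd, phase0_head_flip]; exact hph
            have htc : tailCount hd = m := by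
              rw [hhd, tailCount_update_zero, ← hm]
            have hkT : keyFn hd = 2 * m := by
              unfold keyFn; rw [htc, if_pos hph']; omega
            exact IH _ (by omega) _ rfl y
          · obtain ⟨j, hj, rfl⟩ := Finset.mem_image.mp hT'
            have hjt : S j.succ = true := (Finset.mem_filter.mp hj).2
            have hm1 : 1 ≤ m := by
              rw [← hTcard]; exact Finset.card_pos.mpr ⟨j, hj⟩
            have hph' : phase0 (Function.update S j.succ false) :=
              (phase0_update_succ_false hjt).mpr hph
            have htc : tailCount (Function.update S j.succ false) = m - 1 := by
              rw [tailCount_update_succ_false S j hjt, ← hm]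
            have hkT : keyFn (Function.update S j.succ false) = 2 * (m - 1) := by
              unfold keyFn; rw [htc, if_pos hph']; omega
            exact IH _ (by omega) _ rfl y
        set Pset := Finset.univ.filter (fun j : Fin s => S j.succ = false) with hPs
        have hPcard : m + Pset.card = s := by
          have h0 := Finset.card_filter_add_card_filter_not
            (s := (Finset.univ : Finset (Fin s))) (p := fun j => S j.succ = true)
          have h1 : Finset.univ.filter (fun j : Fin s => ¬ (S j.succ = true)) = Pset := by
            ext j; simp [hPs]
          rw [h1] at h0
          simpa [← hTcard] using h0
        have hupInj : Set.InjOn (fun j : Fin s => Function.update S j.succ true) ↑Pset := by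
          intro a ha b hb heq
          by_contra hab
          have hne : a.succ ≠ b.succ := fun h => hab (Fin.succ_injective _ h)
          have h1 := congrFun heq a.succ
          change Function.update S a.succ true a.succ = Function.update S b.succ true a.succ at h1
          rw [Function.update_self, Function.update_of_ne hne] at h1
          rw [Finset.mem_coe, Finset.mem_filter] at ha
          rw [ha.2] at h1
          exact Bool.false_ne_true h1.symm
        set Pim := Pset.image (fun j => Function.update S j.succ true) with hPim
        have hPimCard : Pim.card = s - m := by
          rw [hPim, Finset.card_image_of_injOn hupInj]; omega
        have hPimAdj : ∀ T ∈ Pim, (cube (s + 1)).Adj S T := by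
          intro T hT'
          obtain ⟨j, hj, rfl⟩ := Finset.mem_image.mp hT'
          have hjf : S j.succ = false := (Finset.mem_filter.mp hj).2
          exact cube_adj_update S j.succ true (by simp [hjf])
        have hPimA : ∀ T ∈ Pim, ∀ y, y ∈ Bf (s - m) → app y T ∈ A := by
          intro T hT' y hy
          obtain ⟨j, hj, rfl⟩ := Finset.mem_image.mp hT'
          have hjf : S j.succ = false := (Finset.mem_filter.mp hj).2
          have hph' : phase0 (Function.update S j.succ true) :=
            (phase0_update_succ_true hjf).mpr hph
          have htc : tailCount (Function.update S j.succ true) = m + 1 := by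
            rw [tailCount_update_succ_true S j hjf, ← hm]
          apply mem_bigSeed Bf hph'
          rw [htc]
          have : s + 1 - (m + 1) = s - m := by omega
          rwa [this]
        have hdisj : Disjoint F Pim := by
          rw [Finset.disjoint_left]
          intro T hTF hTP
          obtain ⟨p, hp, hpeq⟩ := Finset.mem_image.mp hTP
          have hpf : S p.succ = false := (Finset.mem_filter.mp hp).2
          rcases Finset.mem_insert.mp hTF with rfl | hTF
          · have h1 := congrFun hpeq 0
            change Function.update S p.succ true 0 = hd 0 at h1
            rw [Function.update_of_ne (Fin.succ_ne_zero p).symm, hhd, Function.update_self] at h1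
            exact (Bool.not_ne_self (S 0)) h1.symm
          · obtain ⟨j, hj, hjeq⟩ := Finset.mem_image.mp hTF
            have hjt : S j.succ = true := (Finset.mem_filter.mp hj).2
            have hpj : j.succ ≠ p.succ := by
              intro h
              rw [Fin.succ_injective _ h] at hjt
              rw [hpf] at hjt
              exact Bool.false_ne_true hjt
            have h1 := congrFun (hjeq.trans hpeq.symm) j.succ
            change Function.update S j.succ false j.succ = Function.update S p.succ true j.succ at h1
            rw [Function.update_self, Function.update_of_ne hpj, hjt] at h1
            exact Bool.false_ne_true h1
        have hB : ∀ y ∈ (↑(Bf (s - m)) : Set (Fin n → Bool)),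
            app y S ∈ infect (cube (n + (s + 1))) (s + 1) A := by
          intro y hy
          apply infect_of_nbrs _ _ _ (E := (F ∪ Pim).image (fun T => app y T))
          · intro w hw
            obtain ⟨T, hT', rfl⟩ := Finset.mem_image.mp hw
            rcases Finset.mem_union.mp hT' with hT' | hT'
            · exact ⟨cube_adj_app_right y (hFadj T hT'), hFfull T hT' y⟩
            · exact ⟨cube_adj_app_right y (hPimAdj T hT'),
                hAsub (hPimA T hT' y (Finset.mem_coe.mp hy))⟩
          · rw [Finset.card_image_of_injective _ (app_right_injective y),
              Finset.card_union_of_disjoint hdisj, hFcard, hPimCard]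
            omega
        exact layer_full A S F hFadj hFfull (s - m) (by rw [hFcard]; omega) ↑(Bf (s - m)) hB
          (hBf _ (by omega)) x
  rw [percolates_iff_infect]
  apply Set.eq_univ_of_forall
  intro v
  obtain ⟨x, S, rfl⟩ := app_surj v
  exact main (keyFn S) S rfl x

end MainPerc

section Counting

/-- The phase-0 layer determined by a tail set. -/
def layerOf {s : ℕ} (T : Finset (Fin s)) : Fin (s + 1) → Bool :=
  Fin.cons (decide (T.card % 2 = 1)) (fun j => decide (j ∈ T))

lemma tailSet_layerOf {s : ℕ} (T : Finset (Fin s)) :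
    Finset.univ.filter (fun j : Fin s => (layerOf T) j.succ = true) = T := by
  ext j; simp [layerOf, Fin.cons_succ]

lemma tailCount_layerOf {s : ℕ} (T : Finset (Fin s)) : tailCount (layerOf T) = T.card := by
  unfold tailCount
  rw [tailSet_layerOf]

lemma phase0_layerOf {s : ℕ} (T : Finset (Fin s)) : phase0 (layerOf T) := by
  unfold phase0
  rw [tailCount_layerOf]
  simp [layerOf, Fin.cons_zero]

lemma layerOf_tailSet {s : ℕ} (S : Fin (s + 1) → Bool) (hS : phase0 S) :
    layerOf (Finset.univ.filter (fun j : Fin s => S j.succ = true)) = S := by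
  funext i
  refine Fin.cases ?_ (fun j => ?_) i
  · simp only [layerOf, Fin.cons_zero]
    have h1 : (Finset.univ.filter (fun j : Fin s => S j.succ = true)).card = tailCount S := rfl
    rw [h1]
    exact hS.symm
  · simp only [layerOf, Fin.cons_succ]
    cases h : S j.succ <;> simp [Finset.mem_filter, h]

lemma sum_phase0 (s : ℕ) (g : ℕ → ℕ) :
    ∑ S ∈ Finset.univ.filter (phase0 (s := s)), g (tailCount S)
      = ∑ m ∈ Finset.range (s + 1), s.choose m * g m := by
  classical
  have h1 : ∑ S ∈ Finset.univ.filter (phase0 (s := s)), g (tailCount S)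
      = ∑ T ∈ (Finset.univ : Finset (Finset (Fin s))), g T.card := by
    apply Finset.sum_nbij' (i := fun S => Finset.univ.filter (fun j : Fin s => S j.succ = true))
      (j := layerOf)
    · intro S _; exact Finset.mem_univ _
    · intro T _
      exact Finset.mem_filter.mpr ⟨Finset.mem_univ _, phase0_layerOf T⟩
    · intro S hS
      exact layerOf_tailSet S (Finset.mem_filter.mp hS).2
    · intro T _
      exact tailSet_layerOf T
    · intro S _; rfl
  have h2 : ∑ T ∈ (Finset.univ : Finset (Finset (Fin s))), g T.card
      = ∑ m ∈ Finset.range (s + 1), s.choose m * g m := by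
    rw [← Finset.powerset_univ, Finset.sum_powerset, Finset.card_univ, Fintype.card_fin]
    apply Finset.sum_congr rfl
    intro m _
    rw [Finset.sum_congr rfl (fun T hT => by rw [(Finset.mem_powersetCard.mp hT).2]),
        Finset.sum_const, Finset.card_powersetCard, Finset.card_univ, Fintype.card_fin,
        smul_eq_mul]
  rw [h1, h2]

lemma sum_pair_split (F : ℕ → ℕ) (K : ℕ) :
    ∑ m ∈ Finset.range (2 * K + 2), F m
      = F 0 + F 1 + ∑ j ∈ Finset.Icc 1 K, (F (2 * j) + F (2 * j + 1)) := by
  induction K with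
  | zero => simp [Finset.sum_range_succ]
  | succ K ih =>
    have h2 : 2 * (K + 1) + 2 = (2 * K + 2) + 1 + 1 := by ring
    rw [h2, Finset.sum_range_succ, Finset.sum_range_succ, ih,
      Finset.sum_Icc_succ_top (by omega)]
    have h3 : 2 * (K + 1) = 2 * K + 2 := by ring
    rw [h3]
    ring

lemma sum_bound (s : ℕ) (mp : ℕ → ℕ) (hmp : ∀ t, mp t ≤ mp (t + 1)) :
    ∑ m ∈ Finset.range (s + 1), s.choose m * mp (s + 1 - m) ≤
      mp (s + 1) + s * mp s +
        ∑ j ∈ Finset.Icc 1 ((s + 2) / 2 - 1), (s + 1).choose (2 * j + 1) * mp (s + 1 - 2 * j) := by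
  set F : ℕ → ℕ := fun m => s.choose m * mp (s + 1 - m) with hF
  set J := (s + 2) / 2 - 1 with hJ
  have hJ2 : s + 1 ≤ 2 * J + 2 := by omega
  have h1 : ∑ m ∈ Finset.range (s + 1), F m = ∑ m ∈ Finset.range (2 * J + 2), F m := by
    apply Finset.sum_subset (Finset.range_subset_range.mpr hJ2)
    intro m _ hm
    rw [Finset.mem_range, not_lt] at hm
    have : s < m := by omega
    simp [hF, Nat.choose_eq_zero_of_lt this]
  rw [h1, sum_pair_split F J]
  have hF0 : F 0 = mp (s + 1) := by simp [hF]
  have hF1 : F 1 = s * mp s := by simp [hF, Nat.choose_one_right]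
  rw [hF0, hF1]
  have hpair : ∀ j ∈ Finset.Icc 1 J,
      F (2 * j) + F (2 * j + 1) ≤ (s + 1).choose (2 * j + 1) * mp (s + 1 - 2 * j) := by
    intro j _
    by_cases h2j : 2 * j ≤ s
    · have hmono : mp (s + 1 - (2 * j + 1)) ≤ mp (s + 1 - 2 * j) := by
        have he : s + 1 - 2 * j = (s + 1 - (2 * j + 1)) + 1 := by omega
        rw [he]
        exact hmp _
      calc F (2 * j) + F (2 * j + 1)
          ≤ s.choose (2 * j) * mp (s + 1 - 2 * j) + s.choose (2 * j + 1) * mp (s + 1 - 2 * j) := by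
            apply Nat.add_le_add (le_refl _)
            exact Nat.mul_le_mul_left _ hmono
        _ = (s.choose (2 * j) + s.choose (2 * j + 1)) * mp (s + 1 - 2 * j) := by ring
        _ = (s + 1).choose (2 * j + 1) * mp (s + 1 - 2 * j) := by
            rw [← Nat.choose_succ_succ]
    · have hz1 : s.choose (2 * j) = 0 := Nat.choose_eq_zero_of_lt (by omega)
      have hz2 : s.choose (2 * j + 1) = 0 := Nat.choose_eq_zero_of_lt (by omega)
      simp [hF, hz1, hz2]
  exact Nat.add_le_add (le_refl _) (Finset.sum_le_sum hpair)

end Counting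

section Assembly

lemma bigSeed_card_le (n s : ℕ) (Bf : ℕ → Finset (Fin n → Bool)) :
    (bigSeed n s Bf).card ≤
      ∑ S ∈ Finset.univ.filter (phase0 (s := s)), (Bf (s + 1 - tailCount S)).card := by
  classical
  exact le_trans Finset.card_biUnion_le
    (Finset.sum_le_sum (fun S _ => Finset.card_image_le))

theorem stmt12' (d r : ℕ) (hr : 1 ≤ r) (hrd : r ≤ d) :
    minPerc (cube d) r ≤
      minPerc (cube (d - r)) r + (r - 1) * minPerc (cube (d - r)) (r - 1) +
        ∑ j ∈ Finset.Icc 1 ((r + 1) / 2 - 1),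
          Nat.choose r (2 * j + 1) * minPerc (cube (d - r)) (r - 2 * j) := by
  classical
  obtain ⟨s, rfl⟩ : ∃ s, r = s + 1 := ⟨r - 1, by omega⟩
  obtain ⟨n, rfl⟩ : ∃ n, d = n + (s + 1) := ⟨d - (s + 1), by omega⟩
  have hd : n + (s + 1) - (s + 1) = n := by omega
  rw [hd]
  choose Bset hBperc hBcard using fun t => exists_minPerc_set (cube n) t
  set Bf : ℕ → Finset (Fin n → Bool) := fun t => (Bset t).toFinset with hBf
  have hBfco : ∀ t, (↑(Bf t) : Set (Fin n → Bool)) = Bset t := by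
    intro t; rw [hBf]; exact Set.coe_toFinset _
  have hBfperc : ∀ t, t ≤ s + 1 → Percolates (cube n) t ↑(Bf t) := by
    intro t _
    rw [hBfco]; exact hBperc t
  have hBfcard : ∀ t, (Bf t).card = minPerc (cube n) t := by
    intro t
    rw [← Set.ncard_coe_finset, hBfco]
    exact hBcard t
  have hperc := main_perc n s Bf hBfperc
  have h1 : minPerc (cube (n + (s + 1))) (s + 1) ≤ (bigSeed n s Bf).card := by
    have := minPerc_le (cube (n + (s + 1))) (s + 1) ↑(bigSeed n s Bf) hperc
    rwa [Set.ncard_coe_finset] at this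
  refine le_trans h1 (le_trans (bigSeed_card_le n s Bf) ?_)
  have h2 : ∑ S ∈ Finset.univ.filter (phase0 (s := s)), (Bf (s + 1 - tailCount S)).card
      = ∑ m ∈ Finset.range (s + 1), s.choose m * minPerc (cube n) (s + 1 - m) := by
    calc ∑ S ∈ Finset.univ.filter (phase0 (s := s)), (Bf (s + 1 - tailCount S)).card
        = ∑ S ∈ Finset.univ.filter (phase0 (s := s)),
            minPerc (cube n) (s + 1 - tailCount S) :=
          Finset.sum_congr rfl (fun S _ => hBfcard _)
      _ = _ := sum_phase0 s (fun m => minPerc (cube n) (s + 1 - m))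
  rw [h2]
  have hmono : ∀ t, minPerc (cube n) t ≤ minPerc (cube n) (t + 1) :=
    fun t => minPerc_mono (cube n) (by omega)
  have h3 := sum_bound s (fun t => minPerc (cube n) t) hmono
  have he : (s + 1 + 1) / 2 - 1 = (s + 2) / 2 - 1 := by omega
  simp only [Nat.add_sub_cancel, he]
  simpa using h3

end Assembly

/-- Recursive upper bound:
`m(Q_d,r) ≤ m(Q_{d-r},r) + (r-1)·m(Q_{d-r},r-1) + ∑_{j=1}^{⌈r/2⌉-1} C(r,2j+1)·m(Q_{d-r},r-2j)`. -/
theorem stmt12 (d r : ℕ) (hr : 1 ≤ r) (hrd : r ≤ d) :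
    minPerc (cube d) r ≤
      minPerc (cube (d - r)) r + (r - 1) * minPerc (cube (d - r)) (r - 1) +
        ∑ j ∈ Finset.Icc 1 ((r + 1) / 2 - 1),
          Nat.choose r (2 * j + 1) * minPerc (cube (d - r)) (r - 2 * j) :=
  stmt12' d r hr hrd
end
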